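/- arXiv:1806.11042 — 7 statements merged into one kernel-verified Lean document; each statement's English description precedes it below -/
import Mathlib

section
/- Let A be a real skew-symmetric d×d matrix and let f : ℝ^d → ℂ be A-positive. Then for all ζ₁, ζ₂ ∈ ℝ^d one has |f(ζ₁) − f(ζ₂)|² ≤ 4 · Re(f(0)) · |f(0) − f(ζ₂ − ζ₁) · exp((i/2) · ζ₁ᵀ A ζ₂)|. -/
open scoped ComplexOrder Matrix

/-- A function `f : ℝ^d → ℂ` is `A`-positive (for a real skew-symmetric matrix `A`) if for
every finite collection of vectors `ξ 0, …, ξ (N-1)` the `N × N` matrix with entries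
`f (ξ μ - ξ ν) * exp ((i/2) * ξ μ ᵀ A ξ ν)` is positive semidefinite. -/
def APos {d : ℕ} (A : Matrix (Fin d) (Fin d) ℝ) (f : (Fin d → ℝ) → ℂ) : Prop :=
  ∀ (N : ℕ) (ξ : Fin N → Fin d → ℝ),
    (Matrix.of fun μ ν : Fin N =>
      f (ξ μ - ξ ν) * Complex.exp (Complex.I / 2 * ((ξ μ ⬝ᵥ A.mulVec (ξ ν) : ℝ) : ℂ))).PosSemidef

open Complex ComplexConjugate in
theorem stmt_4 {d : ℕ} (A : Matrix (Fin d) (Fin d) ℝ) (hA : Aᵀ = -A)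
    (f : (Fin d → ℝ) → ℂ) (hf : APos A f) :
    ∀ ζ₁ ζ₂ : Fin d → ℝ,
      ‖f ζ₁ - f ζ₂‖ ^ 2 ≤
        4 * (f 0).re *
          ‖f 0 -
            f (ζ₂ - ζ₁) * Complex.exp (Complex.I / 2 * ((ζ₁ ⬝ᵥ A.mulVec ζ₂ : ℝ) : ℂ))‖ := by
  intro ζ₁ ζ₂
  have antisym : ∀ v w : Fin d → ℝ, v ⬝ᵥ A.mulVec w = -(w ⬝ᵥ A.mulVec v) := by
    intro v w
    rw [Matrix.dotProduct_mulVec, ← Matrix.mulVec_transpose, hA, Matrix.neg_mulVec,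
      neg_dotProduct, dotProduct_comm]
  have diag0 : ∀ v : Fin d → ℝ, v ⬝ᵥ A.mulVec v = 0 := by
    intro v; have := antisym v v; linarith
  -- f 0 is nonneg real
  have hf00 : 0 ≤ f 0 := by
    have h := (hf 1 ![0]).dotProduct_mulVec_nonneg ![1]
    simpa [Matrix.mulVec, dotProduct, diag0] using h
  have ha : 0 ≤ (f 0).re := (Complex.nonneg_iff.mp hf00).1
  have hf0 : f 0 = ((f 0).re : ℂ) :=
    Complex.ext (by simp) (by simp [(Complex.nonneg_iff.mp hf00).2])
  -- conjugation symmetry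
  have hconj : ∀ ξv : Fin d → ℝ, f (-ξv) = conj (f ξv) := by
    intro ξv
    have h : conj (f (-ξv)) = f ξv := by
      simpa [Matrix.mulVec, dotProduct, diag0] using (hf 2 ![0, ξv]).1.apply 1 0
    have h2 := congrArg conj h
    simpa using h2
  set a : ℝ := (f 0).re with ha_def
  set g : ℂ := f (ζ₂ - ζ₁) * Complex.exp (Complex.I / 2 * ((ζ₁ ⬝ᵥ A.mulVec ζ₂ : ℝ) : ℂ)) with hg_def
  have hgconj : conj g = f (ζ₁ - ζ₂) * Complex.exp (Complex.I / 2 * ((-(ζ₁ ⬝ᵥ A.mulVec ζ₂) : ℝ) : ℂ)) := by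
    rw [hg_def, map_mul, ← Complex.exp_conj, ← hconj, neg_sub]
    congr 1
    push_cast
    simp only [map_mul, map_div₀, Complex.conj_I, Complex.conj_ofReal, map_ofNat]
    ring_nf
  have hE : (Matrix.of fun μ ν : Fin 3 =>
      f (![0, -ζ₁, -ζ₂] μ - ![0, -ζ₁, -ζ₂] ν) *
        Complex.exp (Complex.I / 2 * ((![0, -ζ₁, -ζ₂] μ ⬝ᵥ A.mulVec (![0, -ζ₁, -ζ₂] ν) : ℝ) : ℂ)))
      = !![(a:ℂ), f ζ₁, f ζ₂; conj (f ζ₁), (a:ℂ), g; conj (f ζ₂), conj g, (a:ℂ)] := by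
    ext i j
    fin_cases i <;> fin_cases j <;>
      simp [diag0, ← hf0, hconj, hgconj, antisym ζ₂ ζ₁, neg_sub_neg,
        Matrix.mulVec_neg, dotProduct_neg, neg_dotProduct,
        Matrix.mulVec_zero, dotProduct_zero, zero_dotProduct,
        Complex.ofReal_neg, mul_neg, neg_neg, sub_zero, zero_sub, neg_add_eq_sub] <;> rfl
  have key : ∀ (t : ℝ) (c : ℂ), ‖c‖ = 1 →
      0 ≤ a * t ^ 2 + 2 * t * (c * (f ζ₁ - f ζ₂)).re + 2 * a - 2 * g.re := by
    intro t c hc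
    have hcc : c * conj c = 1 := by
      rw [Complex.mul_conj, ← Complex.sq_norm, hc]; norm_num
    have h := (hf 3 ![0, -ζ₁, -ζ₂]).dotProduct_mulVec_nonneg ![(t : ℂ), c, -c]
    rw [hE] at h
    have hQ : star ![(t : ℂ), c, -c] ⬝ᵥ
        !![(a:ℂ), f ζ₁, f ζ₂; conj (f ζ₁), (a:ℂ), g; conj (f ζ₂), conj g, (a:ℂ)]
          *ᵥ ![(t : ℂ), c, -c]
        = ((a * t ^ 2 + 2 * a : ℝ) : ℂ)
          + ((↑t * c * (f ζ₁ - f ζ₂)) + conj (↑t * c * (f ζ₁ - f ζ₂))) - (g + conj g) := by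
      simp only [Matrix.mulVec, dotProduct, Fin.sum_univ_three, Pi.star_apply,
        Matrix.cons_val_zero, Matrix.cons_val_one, Matrix.head_cons, Matrix.cons_val_two,
        Matrix.tail_cons, Matrix.cons_val', Matrix.of_apply, Matrix.empty_val',
        Matrix.cons_val_fin_one, Matrix.head_fin_const, map_mul, map_sub,
        Complex.conj_ofReal, star_neg, map_neg, RCLike.star_def]
      push_cast
      linear_combination (2 * (a : ℂ) - g - conj g) * hcc
    rw [hQ] at h
    have h2 := (Complex.nonneg_iff.mp h).1
    simp only [Complex.add_re, Complex.sub_re, Complex.sub_im, Complex.add_im,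
      Complex.ofReal_re, Complex.conj_re, Complex.mul_re, Complex.mul_im,
      Complex.ofReal_im, Complex.re_ofReal_mul] at h2 ⊢
    nlinarith [h2]
  -- endgame
  have hB : a - g.re ≤ ‖f 0 - g‖ := by
    have hre : (f 0 - g).re = a - g.re := by rw [hf0]; simp
    exact hre ▸ Complex.re_le_norm _
  have hBnn : 0 ≤ ‖f 0 - g‖ := norm_nonneg _
  by_cases hΔ : f ζ₁ - f ζ₂ = 0
  · rw [hΔ]
    simp only [norm_zero]
    have : (0:ℝ) ≤ 4 * a * ‖f 0 - g‖ :=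
      mul_nonneg (mul_nonneg (by norm_num) ha) hBnn
    nlinarith [this]
  · set r := ‖f ζ₁ - f ζ₂‖ with hr_def
    have hr : 0 < r := by
      rw [hr_def]
      exact norm_pos_iff.mpr hΔ
    set c : ℂ := -(conj (f ζ₁ - f ζ₂)) / (r : ℂ) with hc_def
    have hc : ‖c‖ = 1 := by
      rw [hc_def, norm_div, norm_neg, Complex.norm_conj, Complex.norm_real, Real.norm_eq_abs,
        abs_of_pos hr, ← hr_def, div_self hr.ne']
    have hΔΔ : conj (f ζ₁ - f ζ₂) * (f ζ₁ - f ζ₂) = ((r ^ 2 : ℝ) : ℂ) := by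
      rw [mul_comm, Complex.mul_conj, ← Complex.sq_norm, ← hr_def]
    have hcd : c * (f ζ₁ - f ζ₂) = -(r : ℂ) := by
      have hrC : (r : ℂ) ≠ 0 := by exact_mod_cast hr.ne'
      rw [hc_def, div_mul_eq_mul_div, neg_mul, hΔΔ]
      push_cast
      rw [pow_two, neg_div, mul_div_assoc, div_self hrC, mul_one]
    have key' : ∀ t : ℝ, 0 ≤ a * t ^ 2 - 2 * t * r + 2 * a - 2 * g.re := by
      intro t
      have h := key t c hc
      rw [hcd] at h
      simp only [Complex.neg_re, Complex.ofReal_re] at h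
      linarith
    rcases eq_or_lt_of_le ha with ha0 | ha0
    · exfalso
      have h1 := key' ((2 * a - 2 * g.re + 1) / (2 * r))
      have e : (2 * a - 2 * g.re + 1) / (2 * r) * (2 * r) = 2 * a - 2 * g.re + 1 :=
        div_mul_cancel₀ _ (by positivity)
      have ha' : a = 0 := ha0.symm
      rw [ha'] at h1 e
      nlinarith [h1, e]
    · have h1 := key' (r / a)
      have h2 := mul_nonneg ha0.le h1
      have e2 : a * (a * (r / a) ^ 2) = r ^ 2 := by
        field_simp
      have e3 : a * (2 * (r / a) * r) = 2 * r ^ 2 := by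
        field_simp
      have e4 : 2 * a * (a - g.re) ≤ 2 * a * ‖f 0 - g‖ :=
        mul_le_mul_of_nonneg_left hB (by linarith)
      nlinarith [h2, e2, e3, e4]
end

section
/- Let A be a real skew-symmetric d×d matrix and let f : ℝ^d → ℂ be A-positive. If f is continuous at the origin 0 ∈ ℝ^d, then f is continuous at every point of ℝ^d. -/
open scoped ComplexOrder Matrix

theorem stmt_5 {d : ℕ} (A : Matrix (Fin d) (Fin d) ℝ) (hA : Aᵀ = -A)
    (f : (Fin d → ℝ) → ℂ) (hf : APos A f)
    (h0 : ContinuousAt f 0) :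
    ∀ x : Fin d → ℝ, ContinuousAt f x := by
  have hAs : ∀ x y : Fin d → ℝ, y ⬝ᵥ A.mulVec x = -(x ⬝ᵥ A.mulVec y) := by
    intro x y
    rw [Matrix.dotProduct_mulVec, ← Matrix.mulVec_transpose, hA]
    simp [Matrix.neg_mulVec, dotProduct_comm]
  have hAx : ∀ x : Fin d → ℝ, x ⬝ᵥ A.mulVec x = 0 := by
    intro x; have := hAs x x; linarith
  have hconj : ∀ x, f (-x) = starRingEnd ℂ (f x) := by
    intro x
    have h := (hf 2 ![0, x]).1
    have h2 := congrFun (congrFun h 1) 0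
    simp [Matrix.conjTranspose_apply] at h2
    rw [← h2]; simp
  have hf0 : 0 ≤ f 0 := by
    have h := (hf 1 ![0]).dotProduct_mulVec_nonneg ![1]
    simpa [Matrix.mulVec, dotProduct, Fin.sum_univ_one] using h
  set c : ℝ := (f 0).re with hcdef
  have hcnn : 0 ≤ c := by
    have := (Complex.le_def.mp hf0).1; simpa using this
  have hc : f 0 = (c : ℂ) := by
    have him : (f 0).im = 0 := by
      have := (Complex.le_def.mp hf0).2; simpa using this.symm
    exact Complex.ext rfl (by simpa using him)
  rcases eq_or_lt_of_le hcnn with hc0 | hcpos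
  · -- c = 0 : f is identically zero
    have hf00 : f 0 = 0 := by rw [hc, ← hc0]; simp
    have hz : ∀ x, f x = 0 := by
      intro x
      have h := (hf 2 ![0, x]).dotProduct_mulVec_nonneg ![-(starRingEnd ℂ) (f x), 1]
      simp [Matrix.mulVec, dotProduct, Fin.sum_univ_two, hf00] at h
      rw [hconj, Complex.mul_conj] at h
      have h' : (Complex.normSq (f x) : ℝ) ≤ -(Complex.normSq (f x)) := by
        have := (Complex.le_def.mp h).1; simpa using this
      have : Complex.normSq (f x) = 0 := by
        have := Complex.normSq_nonneg (f x); linarith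
      exact Complex.normSq_eq_zero.mp this
    have : f = fun _ => (0 : ℂ) := funext hz
    intro x; rw [this]; exact continuousAt_const
  · -- c > 0 : key inequality
    have key : ∀ x y : Fin d → ℝ, Complex.normSq (f x - f y) ≤
        2 * c * (c - (f (x - y) *
          Complex.exp (Complex.I / 2 * ((x ⬝ᵥ A.mulVec y : ℝ) : ℂ))).re) := by
      intro x y
      set m : ℂ := f (x - y) * Complex.exp (Complex.I / 2 * ((x ⬝ᵥ A.mulVec y : ℝ) : ℂ)) with hm
      set M : Matrix (Fin 3) (Fin 3) ℂ := Matrix.of fun μ ν : Fin 3 =>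
        f (![0, x, y] μ - ![0, x, y] ν) *
          Complex.exp (Complex.I / 2 * ((![0, x, y] μ ⬝ᵥ A.mulVec (![0, x, y] ν) : ℝ) : ℂ))
        with hMdef
      have hM : M.PosSemidef := hf 3 ![0, x, y]
      have e00 : M 0 0 = (c : ℂ) := by simp [hMdef, hc]
      have e11 : M 1 1 = (c : ℂ) := by simp [hMdef, hc, hAx]
      have e22 : M 2 2 = (c : ℂ) := by simp [hMdef, hc, hAx]
      have e10 : M 1 0 = f x := by simp [hMdef]
      have e20 : M 2 0 = f y := by simp [hMdef]
      have e12 : M 1 2 = m := by simp [hMdef, hm]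
      have e01 : M 0 1 = starRingEnd ℂ (f x) := by
        rw [← hM.1.apply 0 1, e10]; rfl
      have e02 : M 0 2 = starRingEnd ℂ (f y) := by
        rw [← hM.1.apply 0 2, e20]; rfl
      have e21 : M 2 1 = starRingEnd ℂ m := by
        rw [← hM.1.apply 2 1, e12]; rfl
      have h := hM.dotProduct_mulVec_nonneg ![-(starRingEnd ℂ (f x) - starRingEnd ℂ (f y)), (c : ℂ), -(c : ℂ)]
      simp only [Matrix.mulVec, dotProduct, Fin.sum_univ_three, Pi.star_apply,
        Matrix.cons_val_zero, Matrix.cons_val_one, Matrix.head_cons,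
        Matrix.cons_val_two, Matrix.tail_cons] at h
      rw [e00, e11, e22, e10, e20, e12, e01, e02, e21] at h
      have e1 : (f x - f y) * (starRingEnd ℂ (f x) - starRingEnd ℂ (f y)) =
          (Complex.normSq (f x - f y) : ℂ) := by
        rw [← map_sub, Complex.mul_conj]
      have e2 : m + starRingEnd ℂ m = 2 * (m.re : ℂ) := by
        rw [Complex.add_conj]; push_cast; ring
      have hS : star (-(starRingEnd ℂ (f x) - starRingEnd ℂ (f y))) *
            ((c : ℂ) * -(starRingEnd ℂ (f x) - starRingEnd ℂ (f y)) +
              starRingEnd ℂ (f x) * (c : ℂ) + starRingEnd ℂ (f y) * -(c : ℂ)) +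
          star ((c : ℂ)) * (f x * -(starRingEnd ℂ (f x) - starRingEnd ℂ (f y)) +
              (c : ℂ) * (c : ℂ) + m * -(c : ℂ)) +
          star (-(c : ℂ)) * (f y * -(starRingEnd ℂ (f x) - starRingEnd ℂ (f y)) +
              starRingEnd ℂ m * (c : ℂ) + (c : ℂ) * -(c : ℂ)) =
          ((2 * c * (c - m.re) * c - c * Complex.normSq (f x - f y) : ℝ) : ℂ) := by
        simp only [star_neg, star_sub, RingHom.coe_coe, Complex.star_def,
          Complex.conj_conj, Complex.conj_ofReal]
        push_cast
        linear_combination (-(c : ℂ)) * e1 + (-(c : ℂ)^2) * e2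
      rw [hS] at h
      have h' : (0 : ℝ) ≤ 2 * c * (c - m.re) * c - c * Complex.normSq (f x - f y) := by
        exact_mod_cast h
      have h'' : c * Complex.normSq (f x - f y) ≤ c * (2 * c * (c - m.re)) := by linarith
      exact le_of_mul_le_mul_left h'' hcpos
    intro x
    rw [ContinuousAt, tendsto_iff_norm_sub_tendsto_zero]
    have hg : Filter.Tendsto (fun y : Fin d → ℝ =>
        2 * c * (c - (f (y - x) *
          Complex.exp (Complex.I / 2 * ((y ⬝ᵥ A.mulVec x : ℝ) : ℂ))).re))
        (nhds x) (nhds 0) := by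
      have t1 : Filter.Tendsto (fun y : Fin d → ℝ => f (y - x)) (nhds x) (nhds (f 0)) := by
        have ts : Filter.Tendsto (fun y : Fin d → ℝ => y - x) (nhds x) (nhds 0) := by
          have := ((continuous_id.sub (continuous_const (y := x))).tendsto x)
          simp at this; exact this
        exact Filter.Tendsto.comp h0 ts
      have t2 : Filter.Tendsto (fun y : Fin d → ℝ =>
          Complex.exp (Complex.I / 2 * ((y ⬝ᵥ A.mulVec x : ℝ) : ℂ))) (nhds x) (nhds 1) := by
        have cdot : Continuous fun y : Fin d → ℝ => y ⬝ᵥ A.mulVec x := by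
          simp only [dotProduct]
          exact continuous_finset_sum _ fun i _ => (continuous_apply i).mul continuous_const
        have : Continuous fun y : Fin d → ℝ =>
            Complex.exp (Complex.I / 2 * ((y ⬝ᵥ A.mulVec x : ℝ) : ℂ)) :=
          Complex.continuous_exp.comp
            (continuous_const.mul (Complex.continuous_ofReal.comp cdot))
        have := this.tendsto x
        simpa [hAx x] using this
      have t3 := (t1.mul t2)
      rw [hc] at t3
      have t4 := (Complex.continuous_re.tendsto _).comp t3
      have t5 : Filter.Tendsto (fun y : Fin d → ℝ =>
          (f (y - x) * Complex.exp (Complex.I / 2 * ((y ⬝ᵥ A.mulVec x : ℝ) : ℂ))).re)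
          (nhds x) (nhds c) := by simp at t4; exact t4
      have := (tendsto_const_nhds (x := (2 : ℝ) * c)).mul
        ((tendsto_const_nhds (x := c)).sub t5)
      simpa using this
    apply squeeze_zero (fun y => norm_nonneg _)
      (g := fun y => Real.sqrt (2 * c * (c - (f (y - x) *
        Complex.exp (Complex.I / 2 * ((y ⬝ᵥ A.mulVec x : ℝ) : ℂ))).re)))
    · intro y
      rw [Complex.norm_def]
      exact Real.sqrt_le_sqrt (key y x)
    · have := (Real.continuous_sqrt.tendsto 0).comp hg
      simp at this; exact this
end

section
/- Let V be a real symmetric d×d matrix and A a real skew-symmetric d×d matrix. The Gaussian function f : ℝ^d → ℂ defined by f(ξ) = exp(−(1/4) · ξᵀ V ξ) is A-positive if and only if the complex d×d matrix V + i·A (i.e. the real matrix V regarded as complex plus i times the real matrix A regarded as complex) is positive semidefinite. -/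
open scoped ComplexOrder Matrix

namespace StmtAux6

open Complex Filter

variable {d : ℕ}

lemma cast_dot (B : Matrix (Fin d) (Fin d) ℝ) (ξ η : Fin d → ℝ) :
    ((ξ ⬝ᵥ B.mulVec η : ℝ) : ℂ)
      = (fun i => (ξ i : ℂ)) ⬝ᵥ (B.map Complex.ofReal).mulVec (fun i => (η i : ℂ)) := by
  simp only [dotProduct, Matrix.mulVec, Matrix.map_apply]
  push_cast
  ring

lemma skew_dot (A : Matrix (Fin d) (Fin d) ℝ) (hA : Aᵀ = -A) (ξ η : Fin d → ℝ) :
    η ⬝ᵥ A.mulVec ξ = -(ξ ⬝ᵥ A.mulVec η) := by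
  have h : ∀ i j, A i j = - A j i := fun i j => by
    have := congrFun (congrFun hA j) i
    simpa [Matrix.transpose_apply] using this
  have h2 : -(ξ ⬝ᵥ A.mulVec η) = ∑ i, ∑ j, -(ξ i * (A i j * η j)) := by
    simp [dotProduct, Matrix.mulVec, Finset.mul_sum]
  rw [h2]
  simp only [dotProduct, Matrix.mulVec, Finset.mul_sum]
  rw [Finset.sum_comm]
  refine Finset.sum_congr rfl fun i _ => Finset.sum_congr rfl fun j _ => ?_
  rw [h j i]; ring

lemma symm_dot (V : Matrix (Fin d) (Fin d) ℝ) (hV : V.IsSymm) (ξ η : Fin d → ℝ) :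
    η ⬝ᵥ V.mulVec ξ = ξ ⬝ᵥ V.mulVec η := by
  have h : ∀ i j, V i j = V j i := fun i j => by
    have := congrFun (congrFun hV j) i
    simpa [Matrix.transpose_apply] using this
  simp only [dotProduct, Matrix.mulVec, Finset.mul_sum]
  rw [Finset.sum_comm]
  refine Finset.sum_congr rfl fun i _ => Finset.sum_congr rfl fun j _ => ?_
  rw [h j i]; ring

lemma hermM (V A : Matrix (Fin d) (Fin d) ℝ) (hV : V.IsSymm) (hA : Aᵀ = -A) :
    (V.map Complex.ofReal + Complex.I • A.map Complex.ofReal).IsHermitian := by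
  refine Matrix.ext fun i j => ?_
  have hv : V j i = V i j := by
    have := congrFun (congrFun hV i) j
    simpa [Matrix.transpose_apply] using this
  have ha : A j i = - A i j := by
    have := congrFun (congrFun hA i) j
    simpa [Matrix.transpose_apply] using this
  simp [Matrix.conjTranspose_apply, Matrix.add_apply, Matrix.smul_apply, Matrix.map_apply,
    Complex.conj_ofReal, hv, ha, Complex.star_def, map_mul, Complex.conj_I, smul_eq_mul]

lemma quad (V A : Matrix (Fin d) (Fin d) ℝ) (hV : V.IsSymm) (ξ η : Fin d → ℝ) :
    -(1/4 : ℂ) * (((ξ - η) ⬝ᵥ V.mulVec (ξ - η) : ℝ) : ℂ)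
        + Complex.I / 2 * ((ξ ⬝ᵥ A.mulVec η : ℝ) : ℂ)
      = -(1/4 : ℂ) * ((ξ ⬝ᵥ V.mulVec ξ : ℝ) : ℂ) + -(1/4 : ℂ) * ((η ⬝ᵥ V.mulVec η : ℝ) : ℂ)
        + (1/2 : ℂ) * ((fun i => (ξ i : ℂ)) ⬝ᵥ
            (V.map Complex.ofReal + Complex.I • A.map Complex.ofReal).mulVec
            (fun i => (η i : ℂ))) := by
  have hexp : (ξ - η) ⬝ᵥ V.mulVec (ξ - η)
      = ξ ⬝ᵥ V.mulVec ξ + η ⬝ᵥ V.mulVec η - 2 * (ξ ⬝ᵥ V.mulVec η) := by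
    have h1 := symm_dot V hV ξ η
    simp only [sub_dotProduct, Matrix.mulVec_sub, dotProduct_sub]
    linarith
  have hM : (fun i => (ξ i : ℂ)) ⬝ᵥ
        (V.map Complex.ofReal + Complex.I • A.map Complex.ofReal).mulVec (fun i => (η i : ℂ))
      = ((ξ ⬝ᵥ V.mulVec η : ℝ) : ℂ) + Complex.I * ((ξ ⬝ᵥ A.mulVec η : ℝ) : ℂ) := by
    rw [Matrix.add_mulVec, dotProduct_add, Matrix.smul_mulVec,
      dotProduct_smul, smul_eq_mul, ← cast_dot, ← cast_dot]
  rw [hexp, hM]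
  push_cast
  ring

lemma fock_nonneg {N : ℕ} (y : Fin N → ℂ) (w : Fin N → (Fin d → ℂ)) :
    0 ≤ ∑ μ, ∑ ν, (starRingEnd ℂ) (y μ) * y ν
        * Complex.exp ((1/2 : ℂ) * (star (w μ) ⬝ᵥ w ν)) := by
  have hexp : ∀ z : ℂ, Complex.exp z = ∑' k : ℕ, z ^ k / (k.factorial : ℂ) := fun z => by
    rw [Complex.exp_eq_exp_ℂ, NormedSpace.exp_eq_tsum_div]
  have hsummable : ∀ μ ν, Summable (fun k : ℕ =>
      (starRingEnd ℂ) (y μ) * y ν * (((1/2 : ℂ) * (star (w μ) ⬝ᵥ w ν)) ^ k / (k.factorial : ℂ))) :=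
    fun μ ν => (NormedSpace.expSeries_div_summable ((1/2 : ℂ) * (star (w μ) ⬝ᵥ w ν))).mul_left _
  calc (0:ℂ) ≤ ∑' k : ℕ, ∑ μ, ∑ ν, (starRingEnd ℂ) (y μ) * y ν
        * (((1/2 : ℂ) * (star (w μ) ⬝ᵥ w ν)) ^ k / (k.factorial : ℂ)) := ?_
    _ = _ := ?_
  · refine tsum_nonneg fun k => ?_
    have key : ∀ μ ν, (starRingEnd ℂ) (y μ) * y ν
        * (((1/2 : ℂ) * (star (w μ) ⬝ᵥ w ν)) ^ k / (k.factorial : ℂ))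
        = ((1/2 : ℂ) ^ k / (k.factorial : ℂ)) *
          ∑ p : Fin k → Fin d, ((starRingEnd ℂ) (y μ * ∏ i, w μ (p i))) * (y ν * ∏ i, w ν (p i)) := by
      intro μ ν
      have hpow : (star (w μ) ⬝ᵥ w ν) ^ k
          = ∑ p : Fin k → Fin d, ∏ i, (starRingEnd ℂ) (w μ (p i)) * w ν (p i) := by
        have h0 : (star (w μ) ⬝ᵥ w ν) ^ k
            = ∏ _i : Fin k, ∑ j, (starRingEnd ℂ) (w μ j) * w ν j := by
          simp [dotProduct, Finset.prod_const, Complex.star_def, Pi.star_apply]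
        rw [h0, Finset.prod_univ_sum]
        simp [Fintype.piFinset_univ]
      simp only [mul_pow, hpow, Finset.mul_sum, Finset.sum_div, map_mul, map_prod,
        Finset.prod_mul_distrib]
      refine Finset.sum_congr rfl fun p _ => ?_
      ring
    simp only [key, ← Finset.mul_sum]
    have hc : (0:ℂ) ≤ (1/2 : ℂ) ^ k / (k.factorial : ℂ) := by
      have h1 : Complex.ofReal ((1/2 : ℝ) ^ k / (k.factorial : ℝ))
          = (1/2 : ℂ) ^ k / (k.factorial : ℂ) := by push_cast; ring
      rw [← h1]
      exact Complex.zero_le_real.mpr (div_nonneg (pow_nonneg (by norm_num) _) (Nat.cast_nonneg _))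
    refine mul_nonneg hc ?_
    have hswap : ∑ μ : Fin N, ∑ ν : Fin N, ∑ p : Fin k → Fin d,
          ((starRingEnd ℂ) (y μ * ∏ i, w μ (p i))) * (y ν * ∏ i, w ν (p i))
        = ∑ p : Fin k → Fin d,
            (starRingEnd ℂ) (∑ μ, y μ * ∏ i, w μ (p i)) * (∑ ν, y ν * ∏ i, w ν (p i)) := by
      calc ∑ μ : Fin N, ∑ ν : Fin N, ∑ p : Fin k → Fin d,
              ((starRingEnd ℂ) (y μ * ∏ i, w μ (p i))) * (y ν * ∏ i, w ν (p i))
          = ∑ μ : Fin N, ∑ p : Fin k → Fin d, ∑ ν : Fin N,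
              ((starRingEnd ℂ) (y μ * ∏ i, w μ (p i))) * (y ν * ∏ i, w ν (p i)) :=
            Finset.sum_congr rfl fun μ _ => Finset.sum_comm
        _ = ∑ p : Fin k → Fin d, ∑ μ : Fin N, ∑ ν : Fin N,
              ((starRingEnd ℂ) (y μ * ∏ i, w μ (p i))) * (y ν * ∏ i, w ν (p i)) :=
            Finset.sum_comm
        _ = ∑ p : Fin k → Fin d,
              (starRingEnd ℂ) (∑ μ, y μ * ∏ i, w μ (p i)) * (∑ ν, y ν * ∏ i, w ν (p i)) := by
            refine Finset.sum_congr rfl fun p _ => ?_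
            rw [map_sum, Finset.sum_mul_sum]
    rw [hswap]
    refine Finset.sum_nonneg fun p _ => ?_
    rw [starRingEnd_apply]
    exact star_mul_self_nonneg _
  · rw [Summable.tsum_finsetSum (fun μ _ => summable_sum (fun ν _ => hsummable μ ν))]
    refine Finset.sum_congr rfl fun μ _ => ?_
    rw [Summable.tsum_finsetSum (fun ν _ => hsummable μ ν)]
    refine Finset.sum_congr rfl fun ν _ => ?_
    rw [hexp, ← tsum_mul_left]

lemma dot_expand {N : ℕ} (K : Matrix (Fin N) (Fin N) ℂ) (x : Fin N → ℂ) :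
    star x ⬝ᵥ K.mulVec x = ∑ μ, ∑ ν, star (x μ) * (K μ ν * x ν) := by
  simp [dotProduct, Matrix.mulVec, Finset.mul_sum]

lemma forward (V A : Matrix (Fin d) (Fin d) ℝ) (hV : V.IsSymm) (hA : Aᵀ = -A)
    (hM : (V.map Complex.ofReal + Complex.I • A.map Complex.ofReal).PosSemidef) :
    APos A (fun ξ => Complex.exp (-(1 / 4 : ℂ) * ((ξ ⬝ᵥ V.mulVec ξ : ℝ) : ℂ))) := by
  open scoped MatrixOrder Matrix.Norms.L2Operator in
  obtain ⟨B, hB⟩ := CStarAlgebra.nonneg_iff_eq_star_mul_self.mp hM.nonneg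
  rw [Matrix.star_eq_conjTranspose] at hB
  intro N ξ
  set ξc : Fin N → Fin d → ℂ := fun μ i => ((ξ μ) i : ℂ) with hξc
  set w : Fin N → Fin d → ℂ := fun μ => B.mulVec (ξc μ) with hw
  set q : Fin N → ℝ := fun μ => ξ μ ⬝ᵥ V.mulVec (ξ μ) with hq
  have hstar : ∀ μ, star (ξc μ) = ξc μ := fun μ => funext fun i => by
    simp [hξc, Pi.star_apply, Complex.star_def, Complex.conj_ofReal]
  have hG : ∀ μ ν, (ξc μ) ⬝ᵥ
        (V.map Complex.ofReal + Complex.I • A.map Complex.ofReal).mulVec (ξc ν)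
      = star (w μ) ⬝ᵥ w ν := by
    intro μ ν
    rw [hB, ← Matrix.mulVec_mulVec, Matrix.dotProduct_mulVec, hw, Matrix.star_mulVec, hstar]
  have entry : ∀ μ ν, Complex.exp (-(1/4 : ℂ) * (((ξ μ - ξ ν) ⬝ᵥ V.mulVec (ξ μ - ξ ν) : ℝ) : ℂ))
        * Complex.exp (Complex.I / 2 * ((ξ μ ⬝ᵥ A.mulVec (ξ ν) : ℝ) : ℂ))
      = Complex.exp (-(1/4 : ℂ) * ((q μ : ℝ) : ℂ)) * Complex.exp (-(1/4 : ℂ) * ((q ν : ℝ) : ℂ))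
        * Complex.exp ((1/2 : ℂ) * (star (w μ) ⬝ᵥ w ν)) := by
    intro μ ν
    rw [← Complex.exp_add, ← Complex.exp_add, ← Complex.exp_add, quad V A hV, ← hG]
  have hK : ∀ μ ν : Fin N, (Matrix.of fun μ ν : Fin N =>
        Complex.exp (-(1 / 4 : ℂ) * (((ξ μ - ξ ν) ⬝ᵥ V.mulVec (ξ μ - ξ ν) : ℝ) : ℂ))
          * Complex.exp (Complex.I / 2 * ((ξ μ ⬝ᵥ A.mulVec (ξ ν) : ℝ) : ℂ))) μ ν
      = Complex.exp (-(1/4 : ℂ) * ((q μ : ℝ) : ℂ)) * Complex.exp (-(1/4 : ℂ) * ((q ν : ℝ) : ℂ))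
        * Complex.exp ((1/2 : ℂ) * (star (w μ) ⬝ᵥ w ν)) := fun μ ν => entry μ ν
  refine Matrix.PosSemidef.of_dotProduct_mulVec_nonneg ?_ ?_
  · -- Hermitian
    refine Matrix.ext fun μ ν => ?_
    simp only [Matrix.conjTranspose_apply, Matrix.of_apply]
    rw [entry ν μ, entry μ ν, star_mul', star_mul']
    have hqr : ∀ ρ, star (Complex.exp (-(1/4 : ℂ) * ((q ρ : ℝ) : ℂ)))
        = Complex.exp (-(1/4 : ℂ) * ((q ρ : ℝ) : ℂ)) := by
      intro ρ
      rw [← starRingEnd_apply, ← Complex.exp_conj]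
      congr 1
      simp only [map_neg, map_mul, map_div₀, map_one, map_ofNat, Complex.conj_ofReal]
    have hGc : star (Complex.exp ((1/2 : ℂ) * (star (w ν) ⬝ᵥ w μ)))
        = Complex.exp ((1/2 : ℂ) * (star (w μ) ⬝ᵥ w ν)) := by
      rw [← starRingEnd_apply, ← Complex.exp_conj]
      congr 1
      rw [map_mul]
      have h2 : (starRingEnd ℂ) (star (w ν) ⬝ᵥ w μ) = star (w μ) ⬝ᵥ w ν := by
        rw [starRingEnd_apply, ← Matrix.star_dotProduct_star, star_star,
          dotProduct_comm]
      rw [h2, map_div₀, map_one, map_ofNat]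
    rw [hqr, hqr, hGc]
    ring
  · intro x
    set y : Fin N → ℂ := fun μ => x μ * Complex.exp (-(1/4 : ℂ) * ((q μ : ℝ) : ℂ)) with hy
    have hyc : ∀ μ, (starRingEnd ℂ) (y μ)
        = (starRingEnd ℂ) (x μ) * Complex.exp (-(1/4 : ℂ) * ((q μ : ℝ) : ℂ)) := by
      intro μ
      rw [hy, map_mul, ← Complex.exp_conj]
      congr 2
      simp only [map_neg, map_mul, map_div₀, map_one, map_ofNat, Complex.conj_ofReal]
    have hform : star x ⬝ᵥ (Matrix.of fun μ ν : Fin N =>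
          Complex.exp (-(1 / 4 : ℂ) * (((ξ μ - ξ ν) ⬝ᵥ V.mulVec (ξ μ - ξ ν) : ℝ) : ℂ))
            * Complex.exp (Complex.I / 2 * ((ξ μ ⬝ᵥ A.mulVec (ξ ν) : ℝ) : ℂ))).mulVec x
        = ∑ μ, ∑ ν, (starRingEnd ℂ) (y μ) * y ν
            * Complex.exp ((1/2 : ℂ) * (star (w μ) ⬝ᵥ w ν)) := by
      rw [dot_expand]
      refine Finset.sum_congr rfl fun μ _ => Finset.sum_congr rfl fun ν _ => ?_
      rw [hK μ ν, hyc μ]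
      simp only [hy, Complex.star_def]
      ring
    rw [hform]
    exact fock_nonneg y w

lemma backward (V A : Matrix (Fin d) (Fin d) ℝ) (hV : V.IsSymm) (hA : Aᵀ = -A)
    (hpos : APos A (fun ξ => Complex.exp (-(1 / 4 : ℂ) * ((ξ ⬝ᵥ V.mulVec ξ : ℝ) : ℂ)))) :
    (V.map Complex.ofReal + Complex.I • A.map Complex.ofReal).PosSemidef := by
  have hherm := hermM V A hV hA
  refine Matrix.PosSemidef.of_dotProduct_mulVec_nonneg hherm fun z => ?_
  set Mc := V.map Complex.ofReal + Complex.I • A.map Complex.ofReal with hMc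
  have him : (star z ⬝ᵥ Mc.mulVec z).im = 0 := by
    have h1 : star (star z ⬝ᵥ Mc.mulVec z) = star z ⬝ᵥ Mc.mulVec z := by
      calc star (star z ⬝ᵥ Mc.mulVec z) = star (Mc.mulVec z) ⬝ᵥ z := by
            rw [← Matrix.star_dotProduct_star, star_star]
        _ = (star z ᵥ* Mcᴴ) ⬝ᵥ z := by rw [Matrix.star_mulVec]
        _ = (star z ᵥ* Mc) ⬝ᵥ z := by rw [hherm]
        _ = star z ⬝ᵥ Mc.mulVec z := by rw [← Matrix.dotProduct_mulVec]
    have h2 := congrArg Complex.im h1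
    simp only [Complex.star_def, Complex.conj_im] at h2
    linarith
  set u : Fin d → ℝ := fun i => (z i).re with hu
  set v : Fin d → ℝ := fun i => (z i).im with hv
  set x : Fin 3 → Fin d → ℝ := ![u, v, 0] with hx
  set c : Fin 3 → ℂ := ![1, Complex.I, -(1 + Complex.I)] with hc
  set β : Fin 3 → Fin 3 → ℂ := fun μ ν =>
    -(1/4 : ℂ) * (((x μ - x ν) ⬝ᵥ V.mulVec (x μ - x ν) : ℝ) : ℂ)
      + Complex.I / 2 * ((x μ ⬝ᵥ A.mulVec (x ν) : ℝ) : ℂ) with hβ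
  set g : ℝ → ℂ := fun s => ∑ μ, ∑ ν,
    (starRingEnd ℂ) (c μ) * c ν * Complex.exp ((s : ℂ) * β μ ν) with hg
  have hsumc : ∑ μ, c μ = 0 := by
    rw [hc, Fin.sum_univ_three]
    simp
  have hg0 : g 0 = 0 := by
    simp only [hg, Complex.ofReal_zero, zero_mul, Complex.exp_zero, mul_one]
    rw [← Finset.sum_mul_sum, hsumc, mul_zero]
  have hgs : ∀ s : ℝ, 0 ≤ s → 0 ≤ (g s).re := by
    intro s hs
    have hKps := hpos 3 (fun μ => Real.sqrt s • x μ)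
    have h2 := hKps.dotProduct_mulVec_nonneg c
    have hform : star c ⬝ᵥ (Matrix.of fun μ ν : Fin 3 =>
        Complex.exp (-(1 / 4 : ℂ) *
            (((Real.sqrt s • x μ - Real.sqrt s • x ν) ⬝ᵥ
              V.mulVec (Real.sqrt s • x μ - Real.sqrt s • x ν) : ℝ) : ℂ))
          * Complex.exp (Complex.I / 2 *
            (((Real.sqrt s • x μ) ⬝ᵥ A.mulVec (Real.sqrt s • x ν) : ℝ) : ℂ))).mulVec c
        = g s := by
      rw [dot_expand, hg]
      refine Finset.sum_congr rfl fun μ _ => Finset.sum_congr rfl fun ν _ => ?_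
      have hsc1 : Real.sqrt s • x μ - Real.sqrt s • x ν = Real.sqrt s • (x μ - x ν) :=
        (smul_sub _ _ _).symm
      have hsc : ∀ (B : Matrix (Fin d) (Fin d) ℝ) (a b : Fin d → ℝ),
          (Real.sqrt s • a) ⬝ᵥ B.mulVec (Real.sqrt s • b) = s * (a ⬝ᵥ B.mulVec b) := by
        intro B a b
        have hss : Real.sqrt s * Real.sqrt s = s := Real.mul_self_sqrt hs
        rw [smul_dotProduct, Matrix.mulVec_smul, dotProduct_smul,
          smul_eq_mul, smul_eq_mul, ← mul_assoc, hss]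
      rw [Matrix.of_apply, hsc1, hsc, hsc, ← Complex.exp_add, Complex.star_def]
      have harg : -(1 / 4 : ℂ) * ((s * ((x μ - x ν) ⬝ᵥ V.mulVec (x μ - x ν)) : ℝ) : ℂ)
          + Complex.I / 2 * ((s * (x μ ⬝ᵥ A.mulVec (x ν)) : ℝ) : ℂ) = (s : ℂ) * β μ ν := by
        rw [hβ]
        push_cast
        ring
      rw [harg]
      ring
    rw [hform] at h2
    simpa using (Complex.le_def.mp h2).1
  set L : ℂ := ∑ μ, ∑ ν, (starRingEnd ℂ) (c μ) * c ν * β μ ν with hLdef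
  have hL : HasDerivAt g L 0 := by
    rw [hg, hLdef]
    refine HasDerivAt.fun_sum fun μ _ => HasDerivAt.fun_sum fun ν _ => ?_
    have h1 : HasDerivAt (fun y : ℝ => Complex.exp ((y : ℂ) * β μ ν)) (β μ ν) 0 := by
      have h2 : HasDerivAt (fun zz : ℂ => Complex.exp (zz * β μ ν))
          (Complex.exp ((0 : ℂ) * β μ ν) * (1 * β μ ν)) 0 :=
        ((hasDerivAt_id (0 : ℂ)).mul_const (β μ ν)).cexp
      have h3 := h2.comp_ofReal (z := 0)
      simpa using h3
    simpa using h1.const_mul ((starRingEnd ℂ) (c μ) * c ν)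
  have hre : 0 ≤ L.re := by
    have hslope := hasDerivAt_iff_tendsto_slope.mp hL
    have hmono : Tendsto (slope g 0) (nhdsWithin 0 (Set.Ioi 0)) (nhds L) :=
      hslope.mono_left (nhdsWithin_mono 0 (fun y hy => ne_of_gt hy))
    have h3 : Tendsto (fun s => (slope g 0 s).re) (nhdsWithin 0 (Set.Ioi 0)) (nhds L.re) :=
      (Complex.continuous_re.tendsto L).comp hmono
    refine ge_of_tendsto h3 ?_
    filter_upwards [self_mem_nhdsWithin] with s hs
    have hs0 : (0:ℝ) < s := hs
    rw [slope_def_module, hg0, sub_zero, sub_zero]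
    rw [show s⁻¹ • g s = ((s⁻¹ : ℝ) : ℂ) * g s from Complex.real_smul]
    rw [Complex.re_ofReal_mul]
    exact mul_nonneg (inv_nonneg.mpr hs0.le) (hgs s hs0.le)
  have hzdecomp : z = (fun i => ((u i : ℝ) : ℂ)) + Complex.I • (fun i => ((v i : ℝ) : ℂ)) := by
    funext i
    simp only [Pi.add_apply, Pi.smul_apply, smul_eq_mul, hu, hv]
    rw [mul_comm]
    exact (Complex.re_add_im (z i)).symm
  have hzstar : star z = (fun i => ((u i : ℝ) : ℂ)) - Complex.I • (fun i => ((v i : ℝ) : ℂ)) := by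
    funext i
    simp only [Pi.star_apply, Pi.sub_apply, Pi.smul_apply, smul_eq_mul, hu, hv,
      Complex.star_def]
    rw [Complex.ext_iff]
    constructor <;> simp
  have hLval : L = (1/2 : ℂ) * (star z ⬝ᵥ Mc.mulVec z) := by
    have hβval : ∀ μ ν, β μ ν = -(1/4 : ℂ) * ((x μ ⬝ᵥ V.mulVec (x μ) : ℝ) : ℂ)
        + -(1/4 : ℂ) * ((x ν ⬝ᵥ V.mulVec (x ν) : ℝ) : ℂ)
        + (1/2 : ℂ) * ((fun i => ((x μ i : ℝ) : ℂ)) ⬝ᵥ Mc.mulVec (fun i => ((x ν i : ℝ) : ℂ))) :=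
      fun μ ν => quad V A hV (x μ) (x ν)
    have hx0 : x 0 = u := rfl
    have hx1 : x 1 = v := rfl
    have hx2 : x 2 = 0 := rfl
    have hP20 : ∀ b : Fin d → ℂ, (fun i => ((x 2 i : ℝ) : ℂ)) ⬝ᵥ Mc.mulVec b = 0 := by
      intro b
      have : (fun i => ((x 2 i : ℝ) : ℂ)) = 0 := by funext i; simp [hx2]
      rw [this, zero_dotProduct]
    have hP02 : ∀ a : Fin d → ℂ, a ⬝ᵥ Mc.mulVec (fun i => ((x 2 i : ℝ) : ℂ)) = 0 := by
      intro a
      have : (fun i => ((x 2 i : ℝ) : ℂ)) = 0 := by funext i; simp [hx2]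
      rw [this, Matrix.mulVec_zero, dotProduct_zero]
    have hrhs : star z ⬝ᵥ Mc.mulVec z
        = (fun i => ((u i : ℝ) : ℂ)) ⬝ᵥ Mc.mulVec (fun i => ((u i : ℝ) : ℂ))
          + Complex.I * ((fun i => ((u i : ℝ) : ℂ)) ⬝ᵥ Mc.mulVec (fun i => ((v i : ℝ) : ℂ)))
          - Complex.I * ((fun i => ((v i : ℝ) : ℂ)) ⬝ᵥ Mc.mulVec (fun i => ((u i : ℝ) : ℂ)))
          - Complex.I * (Complex.I *
            ((fun i => ((v i : ℝ) : ℂ)) ⬝ᵥ Mc.mulVec (fun i => ((v i : ℝ) : ℂ)))) := by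
      rw [hzstar]
      conv_lhs => rw [hzdecomp]
      rw [Matrix.mulVec_add, Matrix.mulVec_smul, sub_dotProduct,
        dotProduct_add, dotProduct_add, smul_dotProduct,
        dotProduct_smul, dotProduct_smul, smul_dotProduct]
      simp only [smul_eq_mul]
      ring
    rw [hLdef, Fin.sum_univ_three, Fin.sum_univ_three, Fin.sum_univ_three,
      Fin.sum_univ_three]
    simp only [hβval]
    rw [hrhs]
    simp only [hP20, hP02, hx0, hx1]
    rw [hc]
    simp only [Matrix.cons_val_zero, Matrix.cons_val_one, Matrix.head_cons,
      Matrix.cons_val_two, Matrix.tail_cons, map_one, Complex.conj_I, map_neg, map_add]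
    ring
  rw [Complex.le_def]
  constructor
  · have h6 : (star z ⬝ᵥ Mc.mulVec z) = 2 * L := by rw [hLval]; ring
    rw [h6]
    simp only [Complex.zero_re, Complex.mul_re, Complex.re_ofNat, Complex.im_ofNat,
      zero_mul, sub_zero]
    linarith [hre]
  · simp [him]

end StmtAux6

theorem stmt_6 {d : ℕ} (V A : Matrix (Fin d) (Fin d) ℝ)
    (hV : V.IsSymm) (hA : Aᵀ = -A) :
    APos A (fun ξ => Complex.exp (-(1 / 4 : ℂ) * ((ξ ⬝ᵥ V.mulVec ξ : ℝ) : ℂ))) ↔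
      (V.map (Complex.ofReal) + Complex.I • A.map (Complex.ofReal)).PosSemidef := by
  exact ⟨fun h => StmtAux6.backward V A hV hA h, fun h => StmtAux6.forward V A hV hA h⟩
end

section
/- Let A and B be real skew-symmetric d×d matrices, let f : ℝ^d → ℂ be A-positive and g : ℝ^d → ℂ be B-positive. Then the pointwise product f·g : ℝ^d → ℂ is (A+B)-positive. -/
open scoped ComplexOrder Matrix

lemma schur_product_psd {n : ℕ} {M N : Matrix (Fin n) (Fin n) ℂ} (hM : M.PosSemidef)
    (hN : N.PosSemidef) :
    (Matrix.of fun μ ν => M μ ν * N μ ν).PosSemidef := by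
  have hMh := hM.isHermitian
  have hNh := hN.isHermitian
  obtain ⟨P, hP⟩ : ∃ P : Matrix (Fin n) (Fin n) ℂ, M = Pᴴ * P := by
    open scoped MatrixOrder in exact CStarAlgebra.nonneg_iff_eq_star_mul_self.mp hM.nonneg
  obtain ⟨Q, hQ⟩ : ∃ Q : Matrix (Fin n) (Fin n) ℂ, N = Qᴴ * Q := by
    open scoped MatrixOrder in exact CStarAlgebra.nonneg_iff_eq_star_mul_self.mp hN.nonneg
  refine Matrix.PosSemidef.of_dotProduct_mulVec_nonneg ?_ ?_
  · ext μ ν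
    have h1 := congrFun (congrFun hMh μ) ν
    have h2 := congrFun (congrFun hNh μ) ν
    simp only [Matrix.conjTranspose_apply, Matrix.of_apply, star_mul'] at *
    rw [mul_comm, h1, h2, mul_comm]
  · intro x
    set T : Fin n → Fin n → Fin n → Fin n → ℂ := fun μ ν k l =>
      star (x μ) * star (P k μ) * star (Q l μ) * (x ν * P k ν * Q l ν) with hT
    have h1 : (star x) ⬝ᵥ ((Matrix.of fun μ ν => M μ ν * N μ ν) *ᵥ x)
        = ∑ μ, ∑ ν, ∑ k, ∑ l, T μ ν k l := by
      subst hP hQ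
      simp only [dotProduct, Matrix.mulVec, Matrix.of_apply, Matrix.mul_apply,
        Matrix.conjTranspose_apply, Pi.star_apply, Finset.mul_sum, Finset.sum_mul, hT]
      refine Finset.sum_congr rfl fun μ _ => Finset.sum_congr rfl fun ν _ => ?_
      rw [Finset.sum_comm]
      exact Finset.sum_congr rfl fun k _ => Finset.sum_congr rfl fun l _ => by ring
    have h2 : (∑ k, ∑ l, star (∑ ν, x ν * P k ν * Q l ν) * (∑ ν, x ν * P k ν * Q l ν))
        = ∑ k, ∑ l, ∑ μ, ∑ ν, T μ ν k l := by
      refine Finset.sum_congr rfl fun k _ => Finset.sum_congr rfl fun l _ => ?_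
      rw [star_sum, Finset.sum_mul_sum]
      refine Finset.sum_congr rfl fun μ _ => Finset.sum_congr rfl fun ν _ => ?_
      simp only [star_mul', hT]
    have h3 : (∑ μ, ∑ ν, ∑ k, ∑ l, T μ ν k l) = ∑ k, ∑ l, ∑ μ, ∑ ν, T μ ν k l := by
      have := Finset.sum_comm (s := (Finset.univ : Finset (Fin n × Fin n)))
        (t := (Finset.univ : Finset (Fin n × Fin n)))
        (f := fun p q => T p.1 p.2 q.1 q.2)
      simpa [Fintype.sum_prod_type] using this
    rw [h1, h3, ← h2]
    exact Finset.sum_nonneg fun k _ => Finset.sum_nonneg fun l _ => star_mul_self_nonneg _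

theorem stmt_7 {d : ℕ} (A B : Matrix (Fin d) (Fin d) ℝ)
    (hA : Aᵀ = -A) (hB : Bᵀ = -B)
    (f g : (Fin d → ℝ) → ℂ) (hf : APos A f) (hg : APos B g) :
    APos (A + B) (fun ξ => f ξ * g ξ) := by
  intro N ξ
  have := schur_product_psd (hf N ξ) (hg N ξ)
  convert this using 2
  ext μ ν
  simp only [Matrix.of_apply]
  rw [Matrix.add_mulVec, dotProduct_add, Complex.ofReal_add, mul_add, Complex.exp_add]
  ring
end

section
/- Let S be a real skew-symmetric d×d matrix and let ‖S‖ denote its operator (spectral) norm. Then the Gaussian function g : ℝ^d → ℂ defined by g(ξ) = exp(−(1/4) · ‖S‖ · ξᵀξ) is S-positive; equivalently, the complex d×d matrix ‖S‖·I + i·S is positive semidefinite. -/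
open scoped ComplexOrder Matrix Nat RealInnerProductSpace
open Matrix

/-- The operator (spectral) norm of a real matrix, i.e. the norm of the induced linear map
between Euclidean spaces. -/
noncomputable def matrixOpNorm {d : ℕ} (S : Matrix (Fin d) (Fin d) ℝ) : ℝ :=
  ‖LinearMap.toContinuousLinearMap (Matrix.toEuclideanLin S)‖


variable {N : Type*} [Fintype N]

private lemma qform_expand (M : Matrix N N ℂ) (x : N → ℂ) :
    star x ⬝ᵥ M *ᵥ x = ∑ μ, ∑ ν, (starRingEnd ℂ) (x μ) * M μ ν * x ν := by
  simp [dotProduct, mulVec, Finset.mul_sum, mul_assoc]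

private lemma schur {M G : Matrix N N ℂ} (hM : M.PosSemidef) (hG : G.PosSemidef) :
    (Matrix.of fun μ ν => M μ ν * G μ ν).PosSemidef := by
  exact hM.hadamard hG

private lemma posSemidef_ones : (Matrix.of fun _ _ : N => (1 : ℂ)).PosSemidef := by
  refine posSemidef_iff_dotProduct_mulVec.mpr ⟨?_, ?_⟩
  · exact IsHermitian.ext fun μ ν => by simp
  · intro x
    have : star x ⬝ᵥ (Matrix.of fun _ _ : N => (1 : ℂ)) *ᵥ x
        = (starRingEnd ℂ) (∑ ν, x ν) * (∑ ν, x ν) := by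
      rw [qform_expand]
      simp only [Matrix.of_apply, mul_one, map_sum, Finset.sum_mul, Finset.mul_sum]
      rw [Finset.sum_comm]
    rw [this]
    exact star_mul_self_nonneg _

private lemma posSemidef_hpow {G : Matrix N N ℂ} (hG : G.PosSemidef) (n : ℕ) :
    (Matrix.of fun μ ν => (G μ ν) ^ n).PosSemidef := by
  induction n with
  | zero => simpa using posSemidef_ones (N := N)
  | succ n ih =>
    have := schur hG ih
    convert this using 2
    ext μ ν
    simp [pow_succ, mul_comm]

private lemma posSemidef_entry_exp {G : Matrix N N ℂ} (hG : G.PosSemidef) :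
    (Matrix.of fun μ ν => Complex.exp (G μ ν)).PosSemidef := by
  have hsum : ∀ (z : ℂ), Summable fun n : ℕ => z ^ n / n ! :=
    fun z => NormedSpace.expSeries_div_summable z
  refine posSemidef_iff_dotProduct_mulVec.mpr ⟨?_, ?_⟩
  · refine IsHermitian.ext fun μ ν => ?_
    simp only [Matrix.of_apply, Complex.star_def, ← Complex.exp_conj]
    exact congrArg Complex.exp (hG.1.apply μ ν)
  · intro x
    have key : star x ⬝ᵥ (Matrix.of fun μ ν => Complex.exp (G μ ν)) *ᵥ x
        = ∑' n : ℕ, ∑ μ, ∑ ν,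
            (starRingEnd ℂ) (x μ) * (G μ ν ^ n / n !) * x ν := by
      rw [qform_expand]
      have step1 : ∀ μ, ∑ ν, (starRingEnd ℂ) (x μ) *
            (Matrix.of fun μ ν => Complex.exp (G μ ν)) μ ν * x ν
          = ∑' n : ℕ, ∑ ν, (starRingEnd ℂ) (x μ) * (G μ ν ^ n / n !) * x ν := by
        intro μ
        rw [Summable.tsum_finsetSum (fun ν _ => (((hsum (G μ ν)).mul_left _).mul_right _))]
        refine Finset.sum_congr rfl fun ν _ => ?_
        simp only [Matrix.of_apply]
        rw [Complex.exp_eq_exp_ℂ, NormedSpace.exp_eq_tsum_div, ← tsum_mul_left,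
          ← tsum_mul_right]
      rw [Finset.sum_congr rfl fun μ _ => step1 μ]
      exact (Summable.tsum_finsetSum fun μ _ => summable_sum
        fun ν _ => (((hsum (G μ ν)).mul_left _).mul_right _)).symm
    have hterm : ∀ n : ℕ,
        (0:ℂ) ≤ ∑ μ, ∑ ν, (starRingEnd ℂ) (x μ) * (G μ ν ^ n / n !) * x ν := by
      intro n
      have h0 : (0:ℂ) ≤ (Complex.ofReal ((n ! : ℝ)⁻¹)) *
          (star x ⬝ᵥ (Matrix.of fun μ ν => (G μ ν) ^ n) *ᵥ x) :=
        mul_nonneg (Complex.zero_le_real.mpr (by positivity)) ((posSemidef_hpow hG n).dotProduct_mulVec_nonneg x)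
      refine le_of_le_of_eq h0 ?_
      rw [qform_expand, Finset.mul_sum]
      refine Finset.sum_congr rfl fun μ _ => ?_
      rw [Finset.mul_sum]
      refine Finset.sum_congr rfl fun ν _ => ?_
      simp only [Matrix.of_apply]
      push_cast
      ring
    have hsumm : Summable fun n : ℕ => ∑ μ, ∑ ν,
        (starRingEnd ℂ) (x μ) * (G μ ν ^ n / n !) * x ν :=
      summable_sum fun μ _ => summable_sum
        fun ν _ => (((hsum (G μ ν)).mul_left _).mul_right _)
    rw [key, Complex.le_def]
    refine ⟨?_, ?_⟩
    · rw [Complex.re_tsum hsumm]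
      simp only [Complex.zero_re]
      exact tsum_nonneg fun n => (Complex.le_def.mp (hterm n)).1
    · rw [Complex.im_tsum hsumm]
      simp only [Complex.zero_im]
      have him : ∀ n : ℕ,
          (∑ μ, ∑ ν, (starRingEnd ℂ) (x μ) * (G μ ν ^ n / n !) * x ν).im = 0 :=
        fun n => ((Complex.le_def.mp (hterm n)).2).symm
      rw [tsum_congr him, tsum_zero]

private lemma skew_diag {d : ℕ} {S : Matrix (Fin d) (Fin d) ℝ} (hS : Sᵀ = -S)
    (u : Fin d → ℝ) : u ⬝ᵥ S *ᵥ u = 0 := by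
  have h1 : u ⬝ᵥ S *ᵥ u = (Sᵀ *ᵥ u) ⬝ᵥ u := by
    rw [Matrix.dotProduct_mulVec, Matrix.mulVec_transpose]
  have h2 : u ⬝ᵥ S *ᵥ u = -(u ⬝ᵥ S *ᵥ u) := by
    conv_lhs => rw [h1, hS, Matrix.neg_mulVec, neg_dotProduct, dotProduct_comm]
  linarith [h2]

private lemma skew_swap {d : ℕ} {S : Matrix (Fin d) (Fin d) ℝ} (hS : Sᵀ = -S)
    (u v : Fin d → ℝ) : v ⬝ᵥ S *ᵥ u = -(u ⬝ᵥ S *ᵥ v) := by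
  have h1 : v ⬝ᵥ S *ᵥ u = (Sᵀ *ᵥ v) ⬝ᵥ u := by
    rw [Matrix.dotProduct_mulVec, Matrix.mulVec_transpose]
  rw [h1, hS, Matrix.neg_mulVec, neg_dotProduct, dotProduct_comm]

private lemma opNorm_bound {d : ℕ} (S : Matrix (Fin d) (Fin d) ℝ) (a b : Fin d → ℝ) :
    2 * (a ⬝ᵥ S *ᵥ b) ≤ matrixOpNorm S * (a ⬝ᵥ a + b ⬝ᵥ b) := by
  set c := matrixOpNorm S with hc
  set T := LinearMap.toContinuousLinearMap (Matrix.toEuclideanLin S) with hT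
  set ea : EuclideanSpace ℝ (Fin d) := (WithLp.equiv 2 (Fin d → ℝ)).symm a
  set eb : EuclideanSpace ℝ (Fin d) := (WithLp.equiv 2 (Fin d → ℝ)).symm b
  have hTb : T eb = (WithLp.equiv 2 (Fin d → ℝ)).symm (S *ᵥ b) := by
    simp [hT, Matrix.toEuclideanLin_apply, ea, eb]
  have h1 : a ⬝ᵥ S *ᵥ b = ⟪ea, T eb⟫ := by
    rw [hTb]
    simp [PiLp.inner_apply, dotProduct, ea, RCLike.inner_apply]
    exact Finset.sum_congr rfl fun i _ => mul_comm _ _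
  have h2 : ⟪ea, T eb⟫ ≤ ‖ea‖ * (c * ‖eb‖) :=
    le_trans (real_inner_le_norm _ _)
      (mul_le_mul_of_nonneg_left (T.le_opNorm eb) (norm_nonneg _))
  have h3 : a ⬝ᵥ a = ‖ea‖ ^ 2 := by
    rw [← real_inner_self_eq_norm_sq]
    simp [PiLp.inner_apply, dotProduct, ea, RCLike.inner_apply]
    rw [EuclideanSpace.real_norm_sq_eq]
    simp [sq]
  have h4 : b ⬝ᵥ b = ‖eb‖ ^ 2 := by
    rw [← real_inner_self_eq_norm_sq]
    simp [PiLp.inner_apply, dotProduct, eb, RCLike.inner_apply]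
    rw [EuclideanSpace.real_norm_sq_eq]
    simp [sq]
  have hc0 : 0 ≤ c := norm_nonneg _
  nlinarith [sq_nonneg (‖ea‖ - ‖eb‖), norm_nonneg ea, norm_nonneg eb, h1, h2]

private lemma coe_dot {d : ℕ} (u v : Fin d → ℝ) :
    ((fun i => (u i : ℂ)) ⬝ᵥ (fun i => (v i : ℂ))) = ((u ⬝ᵥ v : ℝ) : ℂ) := by
  simp [dotProduct]

private lemma coe_mulVec {d : ℕ} (S : Matrix (Fin d) (Fin d) ℝ) (v : Fin d → ℝ) :
    (S.map Complex.ofReal) *ᵥ (fun i => (v i : ℂ)) = fun i => (((S *ᵥ v) i : ℝ) : ℂ) := by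
  funext i
  simp [Matrix.mulVec, dotProduct]

private lemma key_psd {d : ℕ} (S : Matrix (Fin d) (Fin d) ℝ) (hS : Sᵀ = -S) :
    ((matrixOpNorm S : ℂ) • (1 : Matrix (Fin d) (Fin d) ℂ)
      + Complex.I • S.map (Complex.ofReal)).PosSemidef := by
  set c := matrixOpNorm S with hc
  refine posSemidef_iff_dotProduct_mulVec.mpr ⟨?_, ?_⟩
  · refine IsHermitian.ext fun i j => ?_
    have hji : S j i = - S i j := by
      have := congrFun (congrFun hS i) j
      simpa [Matrix.transpose_apply, Matrix.neg_apply] using this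
    simp only [Matrix.add_apply, Matrix.smul_apply, Matrix.map_apply, smul_eq_mul, star_add,
      star_mul', Complex.star_def, Complex.conj_ofReal, Complex.conj_I, hji]
    by_cases h : i = j
    · subst h
      simp only [Matrix.one_apply_eq, _root_.map_one]
      push_cast
      ring
    · have h' : ¬ j = i := fun hh => h hh.symm
      simp only [Matrix.one_apply_ne h, Matrix.one_apply_ne h', _root_.map_zero]
      push_cast
      ring
  · intro x
    set a : Fin d → ℝ := fun i => (x i).re with ha
    set b : Fin d → ℝ := fun i => (x i).im with hb
    have hx : x = (fun i => ((a i : ℝ) : ℂ)) + Complex.I • (fun i => ((b i : ℝ) : ℂ)) := by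
      funext i
      simp only [Pi.add_apply, Pi.smul_apply, smul_eq_mul, ha, hb]
      rw [mul_comm]
      exact (Complex.re_add_im (x i)).symm
    have hxs : star x = (fun i => ((a i : ℝ) : ℂ)) - Complex.I • (fun i => ((b i : ℝ) : ℂ)) := by
      funext i
      simp only [Pi.star_apply, Pi.sub_apply, Pi.smul_apply, smul_eq_mul, ha, hb,
        Complex.star_def, Complex.ext_iff, Complex.conj_re, Complex.conj_im,
        Complex.sub_re, Complex.sub_im, Complex.mul_re, Complex.mul_im, Complex.I_re,
        Complex.I_im, Complex.ofReal_re, Complex.ofReal_im]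
      constructor <;> ring
    have expand : star x ⬝ᵥ ((c : ℂ) • (1 : Matrix (Fin d) (Fin d) ℂ)
          + Complex.I • S.map (Complex.ofReal)) *ᵥ x
        = ((c * (a ⬝ᵥ a + b ⬝ᵥ b) - 2 * (a ⬝ᵥ S *ᵥ b) : ℝ) : ℂ) := by
      rw [hxs, hx]
      simp only [Matrix.add_mulVec, Matrix.smul_mulVec, Matrix.one_mulVec,
        Matrix.mulVec_add, Matrix.mulVec_smul, dotProduct_add, sub_dotProduct,
        dotProduct_smul, smul_dotProduct, coe_mulVec, coe_dot, smul_eq_mul]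
      rw [skew_diag hS a, skew_diag hS b, skew_swap hS a b, dotProduct_comm b a]
      push_cast
      ring_nf
      rw [Complex.I_sq]
      ring
    rw [expand]
    rw [Complex.zero_le_real]
    have := opNorm_bound S a b
    linarith

private lemma PosSemidef.half {n : Type*} [Fintype n] {M : Matrix n n ℂ}
    (hM : M.PosSemidef) : ((1/2 : ℂ) • M).PosSemidef := by
  refine posSemidef_iff_dotProduct_mulVec.mpr ⟨?_, ?_⟩
  · show ((1/2 : ℂ) • M)ᴴ = (1/2 : ℂ) • M
    rw [Matrix.conjTranspose_smul, hM.1.eq]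
    norm_num
  · intro x
    rw [Matrix.smul_mulVec, dotProduct_smul, smul_eq_mul]
    refine mul_nonneg ?_ (hM.dotProduct_mulVec_nonneg x)
    rw [show ((1/2 : ℂ)) = ((1/2 : ℝ) : ℂ) by norm_num, Complex.zero_le_real]
    norm_num

theorem stmt_9 {d : ℕ} (S : Matrix (Fin d) (Fin d) ℝ) (hS : Sᵀ = -S) :
    APos S (fun ξ => Complex.exp (-(1 / 4 : ℂ) * (matrixOpNorm S : ℂ) * ((ξ ⬝ᵥ ξ : ℝ) : ℂ))) ∧
      ((matrixOpNorm S : ℂ) • (1 : Matrix (Fin d) (Fin d) ℂ)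
          + Complex.I • S.map (Complex.ofReal)).PosSemidef := by
  have hM := key_psd S hS
  refine ⟨?_, hM⟩
  intro N ξ
  set c := matrixOpNorm S with hc
  set M := (c : ℂ) • (1 : Matrix (Fin d) (Fin d) ℂ) + Complex.I • S.map (Complex.ofReal)
    with hMdef
  have hB : ((1/2 : ℂ) • M).PosSemidef := PosSemidef.half hM
  set V : Matrix (Fin d) (Fin N) ℂ := Matrix.of fun i μ => ((ξ μ i : ℝ) : ℂ) with hV
  have hG : (Vᴴ * ((1/2 : ℂ) • M) * V).PosSemidef := hB.conjTranspose_mul_mul_same V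
  have hGentry : ∀ μ ν, (Vᴴ * ((1/2 : ℂ) • M) * V) μ ν
      = (c/2 : ℂ) * ((ξ μ ⬝ᵥ ξ ν : ℝ) : ℂ)
        + Complex.I/2 * ((ξ μ ⬝ᵥ S *ᵥ (ξ ν) : ℝ) : ℂ) := by
    intro μ ν
    have hsplit : Vᴴ * ((1/2 : ℂ) • M) * V
        = (1/2 : ℂ) • ((c : ℂ) • (Vᴴ * V)
            + Complex.I • (Vᴴ * (S.map Complex.ofReal * V))) := by
      rw [hMdef]
      rw [Matrix.mul_smul, Matrix.smul_mul, Matrix.mul_add, Matrix.add_mul]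
      rw [Matrix.mul_smul, Matrix.mul_one, Matrix.smul_mul, Matrix.mul_smul,
        Matrix.smul_mul, Matrix.mul_assoc]
    have hVV : (Vᴴ * V) μ ν = ((ξ μ ⬝ᵥ ξ ν : ℝ) : ℂ) := by
      simp [Matrix.mul_apply, hV, dotProduct, Complex.conj_ofReal]
    have hVSV : (Vᴴ * (S.map Complex.ofReal * V)) μ ν
        = ((ξ μ ⬝ᵥ S *ᵥ (ξ ν) : ℝ) : ℂ) := by
      simp only [Matrix.mul_apply, hV, Matrix.map_apply, Matrix.of_apply,
        Matrix.conjTranspose_apply, Complex.star_def, Complex.conj_ofReal,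
        dotProduct, Matrix.mulVec, Finset.mul_sum]
      push_cast
      rfl
    rw [hsplit]
    simp only [Matrix.smul_apply, Matrix.add_apply, smul_eq_mul, hVV, hVSV]
    ring
  have hE : (Matrix.of fun μ ν =>
      Complex.exp ((Vᴴ * ((1/2 : ℂ) • M) * V) μ ν)).PosSemidef :=
    posSemidef_entry_exp hG
  set dvec : Fin N → ℂ := fun μ => Complex.exp (-(c/4 : ℂ) * ((ξ μ ⬝ᵥ ξ μ : ℝ) : ℂ))
    with hdvec
  have hK : (Matrix.diagonal dvec * (Matrix.of fun μ ν =>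
        Complex.exp ((Vᴴ * ((1/2 : ℂ) • M) * V) μ ν)) *
        (Matrix.diagonal dvec)ᴴ).PosSemidef :=
    hE.mul_mul_conjTranspose_same (Matrix.diagonal dvec)
  have heq : (Matrix.of fun μ ν : Fin N =>
        (fun η => Complex.exp (-(1 / 4 : ℂ) * (c : ℂ) * ((η ⬝ᵥ η : ℝ) : ℂ))) (ξ μ - ξ ν)
          * Complex.exp (Complex.I / 2 * ((ξ μ ⬝ᵥ S.mulVec (ξ ν) : ℝ) : ℂ)))
      = Matrix.diagonal dvec * (Matrix.of fun μ ν =>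
          Complex.exp ((Vᴴ * ((1/2 : ℂ) • M) * V) μ ν)) * (Matrix.diagonal dvec)ᴴ := by
    ext μ ν
    rw [Matrix.diagonal_conjTranspose, Matrix.mul_diagonal, Matrix.diagonal_mul]
    simp only [Matrix.of_apply, hGentry, hdvec, Pi.star_apply, Complex.star_def,
      ← Complex.exp_conj, _root_.map_mul, map_neg, map_div₀, Complex.conj_ofReal,
      map_ofNat]
    rw [← Complex.exp_add, ← Complex.exp_add, ← Complex.exp_add]
    congr 1
    have hreal : (ξ μ - ξ ν) ⬝ᵥ (ξ μ - ξ ν)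
        = ξ μ ⬝ᵥ ξ μ - 2 * (ξ μ ⬝ᵥ ξ ν) + ξ ν ⬝ᵥ ξ ν := by
      rw [sub_dotProduct, dotProduct_sub, dotProduct_sub, dotProduct_comm (ξ ν) (ξ μ)]
      ring
    rw [hreal]
    push_cast
    ring
  rw [show (Matrix.of fun μ ν : Fin N =>
      (fun η : Fin d → ℝ => Complex.exp (-(1 / 4 : ℂ) * ((matrixOpNorm S : ℝ) : ℂ)
        * ((η ⬝ᵥ η : ℝ) : ℂ))) (ξ μ - ξ ν)
        * Complex.exp (Complex.I / 2 * ((ξ μ ⬝ᵥ S.mulVec (ξ ν) : ℝ) : ℂ))) = _ from heq]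
  exact hK
end

section
/- Let A be a real skew-symmetric d×d matrix, B a real skew-symmetric e×e matrix, M a real d×e matrix, and W a real symmetric e×e matrix such that the complex e×e matrix W + i·(B − MᵀAM) is positive semidefinite. If f : ℝ^d → ℂ is A-positive, then the function h : ℝ^e → ℂ defined by h(η) = f(Mη) · exp(−(1/4) · ηᵀ W η) is B-positive. -/
open scoped ComplexOrder Matrix


lemma psd_entrywise_mul {n : Type*} [Fintype n] {P Q : Matrix n n ℂ}
    (hP : P.PosSemidef) (hQ : Q.PosSemidef) :
    (Matrix.of fun μ ν => P μ ν * Q μ ν).PosSemidef := by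
  obtain ⟨m, v, hv⟩ := Matrix.posSemidef_iff_eq_sum_vecMulVec.mp hP
  obtain ⟨C, hC⟩ : ∃ C : Fin m → n → ℂ, ∀ k μ, C k μ = star (v k μ) := ⟨_, fun _ _ => rfl⟩
  have hPe : ∀ μ ν, P μ ν = ∑ k, star (C k μ) * C k ν := by
    intro μ ν
    rw [hv]
    simp [hC, Matrix.sum_apply, Matrix.vecMulVec_apply]
  refine Matrix.PosSemidef.of_dotProduct_mulVec_nonneg ?_ ?_
  · ext μ ν
    simp only [Matrix.conjTranspose_apply, Matrix.of_apply, star_mul']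
    rw [mul_comm, hP.1.apply, hQ.1.apply]
    exact mul_comm _ _
  · intro x
    have key : star x ⬝ᵥ (Matrix.of fun μ ν => P μ ν * Q μ ν).mulVec x
        = ∑ k, star (fun μ => C k μ * x μ) ⬝ᵥ Q.mulVec (fun μ => C k μ * x μ) := by
      calc star x ⬝ᵥ (Matrix.of fun μ ν => P μ ν * Q μ ν).mulVec x
          = ∑ μ, ∑ ν, ∑ k, star (x μ) * star (C k μ) * Q μ ν * C k ν * x ν := by
            simp only [dotProduct, Matrix.mulVec, Matrix.of_apply, Pi.star_apply, hPe,
              Finset.sum_mul, Finset.mul_sum]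
            exact Finset.sum_congr rfl fun μ _ => Finset.sum_congr rfl fun ν _ =>
              Finset.sum_congr rfl fun k _ => by ring
        _ = ∑ μ, ∑ k, ∑ ν, star (x μ) * star (C k μ) * Q μ ν * C k ν * x ν :=
            Finset.sum_congr rfl fun μ _ => Finset.sum_comm
        _ = ∑ k, ∑ μ, ∑ ν, star (x μ) * star (C k μ) * Q μ ν * C k ν * x ν :=
            Finset.sum_comm
        _ = ∑ k, star (fun μ => C k μ * x μ) ⬝ᵥ Q.mulVec (fun μ => C k μ * x μ) := by
            refine Finset.sum_congr rfl fun k _ => ?_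
            simp only [dotProduct, Matrix.mulVec, Pi.star_apply, star_mul',
              Finset.mul_sum]
            exact Finset.sum_congr rfl fun μ _ => Finset.sum_congr rfl fun ν _ => by ring
    rw [key]
    exact Finset.sum_nonneg fun k _ => hQ.dotProduct_mulVec_nonneg _

lemma psd_ones {n : Type*} [Fintype n] :
    (Matrix.of fun _ _ : n => (1 : ℂ)).PosSemidef := by
  refine Matrix.PosSemidef.of_dotProduct_mulVec_nonneg ?_ ?_
  · ext μ ν; simp
  · intro x
    have : star x ⬝ᵥ (Matrix.of fun _ _ : n => (1 : ℂ)).mulVec x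
        = star (∑ μ, x μ) * (∑ μ, x μ) := by
      simp [dotProduct, Matrix.mulVec, Finset.mul_sum, Finset.sum_mul, star_sum,
        Finset.sum_mul]
      exact Finset.sum_comm
    rw [this]
    exact star_mul_self_nonneg _

lemma psd_entrywise_pow {n : Type*} [Fintype n] {S : Matrix n n ℂ} (hS : S.PosSemidef) (m : ℕ) :
    (Matrix.of fun μ ν => S μ ν ^ m).PosSemidef := by
  induction m with
  | zero => simpa using psd_ones
  | succ m ih =>
      have := psd_entrywise_mul ih hS
      simpa [pow_succ] using this

lemma psd_entrywise_exp {n : Type*} [Fintype n] {S : Matrix n n ℂ} (hS : S.PosSemidef) :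
    (Matrix.of fun μ ν => Complex.exp (S μ ν)).PosSemidef := by
  have hexp : ∀ z : ℂ, Complex.exp z = ∑' m : ℕ, (m.factorial⁻¹ : ℂ) • z ^ m := by
    intro z
    rw [Complex.exp_eq_exp_ℂ, NormedSpace.exp_eq_tsum (𝕂 := ℂ)]
  refine Matrix.PosSemidef.of_dotProduct_mulVec_nonneg ?_ ?_
  · ext μ ν
    simp only [Matrix.conjTranspose_apply, Matrix.of_apply, Complex.star_def,
      ← Complex.exp_conj]
    rw [← Complex.star_def, ← hS.1.apply, star_star]
  · intro x
    have hsum0 : ∀ μ ν : n, Summable fun m : ℕ =>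
        star (x μ) * ((m.factorial⁻¹ : ℂ) • S μ ν ^ m * x ν) :=
      fun μ ν => ((NormedSpace.expSeries_summable' (𝕂 := ℂ) (S μ ν)).mul_right
        (x ν)).mul_left _
    have key : star x ⬝ᵥ (Matrix.of fun μ ν => Complex.exp (S μ ν)).mulVec x
        = ∑' m : ℕ, ∑ μ, ∑ ν, star (x μ) * ((m.factorial⁻¹ : ℂ) • S μ ν ^ m * x ν) := by
      rw [dotProduct]
      calc ∑ μ, star (x μ) * (Matrix.of fun μ ν => Complex.exp (S μ ν)).mulVec x μ
          = ∑ μ, ∑ ν, star (x μ) * (Complex.exp (S μ ν) * x ν) := by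
            simp [Matrix.mulVec, dotProduct, Finset.mul_sum]
        _ = ∑ μ, ∑ ν, ∑' m : ℕ, star (x μ) * ((m.factorial⁻¹ : ℂ) • S μ ν ^ m * x ν) := by
            refine Finset.sum_congr rfl fun μ _ => Finset.sum_congr rfl fun ν _ => ?_
            rw [hexp (S μ ν), ← tsum_mul_right, ← tsum_mul_left]
        _ = ∑' m : ℕ, ∑ μ, ∑ ν, star (x μ) * ((m.factorial⁻¹ : ℂ) • S μ ν ^ m * x ν) := by
            rw [show (∑ μ, ∑ ν, ∑' m : ℕ, star (x μ) * ((m.factorial⁻¹ : ℂ) • S μ ν ^ m * x ν))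
                = ∑ μ, ∑' m : ℕ, ∑ ν, star (x μ) * ((m.factorial⁻¹ : ℂ) • S μ ν ^ m * x ν) from
              Finset.sum_congr rfl fun μ _ => (Summable.tsum_finsetSum fun ν _ => hsum0 μ ν).symm]
            exact (Summable.tsum_finsetSum fun μ _ => summable_sum fun ν _ => hsum0 μ ν).symm
    rw [key]
    refine tsum_nonneg fun m => ?_
    have h1 : (0 : ℂ) ≤ (m.factorial⁻¹ : ℂ) := by
      rw [show ((m.factorial⁻¹ : ℂ)) = ((m.factorial⁻¹ : ℝ) : ℂ) by push_cast; ring]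
      exact_mod_cast Complex.zero_le_real.mpr (by positivity)
    have h2 := (psd_entrywise_pow hS m).dotProduct_mulVec_nonneg x
    have h3 : star x ⬝ᵥ (Matrix.of fun μ ν => S μ ν ^ m).mulVec x
        = ∑ μ, ∑ ν, star (x μ) * (S μ ν ^ m * x ν) := by
      simp [dotProduct, Matrix.mulVec, Finset.mul_sum]
    calc (0:ℂ) ≤ (m.factorial⁻¹ : ℂ) * (star x ⬝ᵥ (Matrix.of fun μ ν => S μ ν ^ m).mulVec x) :=
          mul_nonneg h1 h2
      _ = ∑ μ, ∑ ν, star (x μ) * ((m.factorial⁻¹ : ℂ) • S μ ν ^ m * x ν) := by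
          rw [h3, Finset.mul_sum]
          refine Finset.sum_congr rfl fun μ _ => ?_
          rw [Finset.mul_sum]
          refine Finset.sum_congr rfl fun ν _ => ?_
          simp only [smul_eq_mul]
          ring

lemma psd_smul_real {n : Type*} [Fintype n] {P : Matrix n n ℂ} (hP : P.PosSemidef)
    {t : ℝ} (ht : 0 ≤ t) : ((t : ℂ) • P).PosSemidef := by
  refine Matrix.PosSemidef.of_dotProduct_mulVec_nonneg ?_ ?_
  · ext μ ν
    simp only [Matrix.conjTranspose_apply, Matrix.smul_apply, star_mul', smul_eq_mul,
      Complex.star_def, Complex.conj_ofReal]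
    rw [mul_comm, ← Complex.star_def, ← hP.1.apply, star_star]
    exact mul_comm _ _
  · intro x
    have : star x ⬝ᵥ ((t : ℂ) • P).mulVec x = (t : ℂ) * (star x ⬝ᵥ P.mulVec x) := by
      simp [dotProduct, Matrix.mulVec, Matrix.smul_apply, Finset.mul_sum]
      exact Finset.sum_congr rfl fun μ _ => Finset.sum_congr rfl fun ν _ => by ring
    rw [this]
    exact mul_nonneg (by exact_mod_cast Complex.zero_le_real.mpr ht) (hP.dotProduct_mulVec_nonneg x)

lemma psd_diag_conj {n : Type*} [Fintype n] [DecidableEq n] {P : Matrix n n ℂ}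
    (hP : P.PosSemidef) (g : n → ℂ) :
    (Matrix.of fun μ ν => g μ * P μ ν * star (g ν)).PosSemidef := by
  have h := hP.mul_mul_conjTranspose_same (Matrix.diagonal g)
  have he : Matrix.diagonal g * P * (Matrix.diagonal g)ᴴ
      = Matrix.of fun μ ν => g μ * P μ ν * star (g ν) := by
    rw [Matrix.diagonal_conjTranspose]
    ext μ ν
    simp [Matrix.mul_apply, Matrix.diagonal, Finset.sum_ite_eq, Finset.sum_ite_eq']
  rwa [he] at h

lemma gram_entry {e N : ℕ} (η : Fin N → Fin e → ℝ) (K : Matrix (Fin e) (Fin e) ℂ) (μ ν : Fin N) :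
    (Matrix.of (fun μ j => ((η μ j : ℝ) : ℂ)) * K * (Matrix.of (fun μ j => ((η μ j : ℝ) : ℂ)))ᴴ) μ ν
      = (fun j => ((η μ j : ℝ) : ℂ)) ⬝ᵥ K.mulVec (fun j => ((η ν j : ℝ) : ℂ)) := by
  simp only [Matrix.mul_apply, Matrix.conjTranspose_apply, Matrix.of_apply, dotProduct,
    Matrix.mulVec, Complex.star_def, Complex.conj_ofReal, Finset.sum_mul, Finset.mul_sum]
  rw [Finset.sum_comm]
  exact Finset.sum_congr rfl fun j _ => Finset.sum_congr rfl fun k _ => by ring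

lemma dot_cast {e : ℕ} (u v : Fin e → ℝ) (R : Matrix (Fin e) (Fin e) ℝ) :
    ((fun j => ((u j : ℝ) : ℂ)) ⬝ᵥ (R.map Complex.ofReal).mulVec fun j => ((v j : ℝ) : ℂ))
      = ((u ⬝ᵥ R.mulVec v : ℝ) : ℂ) := by
  simp only [dotProduct, Matrix.mulVec, Matrix.map_apply]
  push_cast
  ring

theorem stmt_10 {d e : ℕ} (A : Matrix (Fin d) (Fin d) ℝ) (hA : Aᵀ = -A)
    (B : Matrix (Fin e) (Fin e) ℝ) (hB : Bᵀ = -B)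
    (M : Matrix (Fin d) (Fin e) ℝ)
    (W : Matrix (Fin e) (Fin e) ℝ) (hW : W.IsSymm)
    (hPSD : (W.map (Complex.ofReal)
        + Complex.I • (B - Mᵀ * A * M).map (Complex.ofReal)).PosSemidef)
    (f : (Fin d → ℝ) → ℂ) (hf : APos A f) :
    APos B (fun η =>
      f (M.mulVec η) * Complex.exp (-(1 / 4 : ℂ) * ((η ⬝ᵥ W.mulVec η : ℝ) : ℂ))) := by
  intro N η
  classical
  have hF := hf N (fun μ => M.mulVec (η μ))
  have hK2 : (((2⁻¹ : ℝ) : ℂ) • (W.map Complex.ofReal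
      + Complex.I • (B - Mᵀ * A * M).map Complex.ofReal)).PosSemidef :=
    psd_smul_real hPSD (by norm_num)
  have hS := hK2.mul_mul_conjTranspose_same (Matrix.of fun μ j => ((η μ j : ℝ) : ℂ))
  have hE := psd_entrywise_exp hS
  have hG := psd_diag_conj hE
    (fun μ => Complex.exp (-(1/4 : ℂ) * ((η μ ⬝ᵥ W.mulVec (η μ) : ℝ) : ℂ)))
  have hFG := psd_entrywise_mul hF hG
  convert hFG using 1
  ext μ ν
  simp only [Matrix.of_apply]
  -- entry-level facts
  have hsub : M.mulVec (η μ - η ν) = M.mulVec (η μ) - M.mulVec (η ν) := Matrix.mulVec_sub M _ _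
  have hsymm : η ν ⬝ᵥ W.mulVec (η μ) = η μ ⬝ᵥ W.mulVec (η ν) := by
    rw [Matrix.dotProduct_mulVec, ← Matrix.mulVec_transpose, hW.eq, dotProduct_comm]
  have hqsplit : (η μ - η ν) ⬝ᵥ W.mulVec (η μ - η ν)
      = η μ ⬝ᵥ W.mulVec (η μ) - 2 * (η μ ⬝ᵥ W.mulVec (η ν)) + η ν ⬝ᵥ W.mulVec (η ν) := by
    simp only [sub_dotProduct, Matrix.mulVec_sub, dotProduct_sub, hsymm]
    ring
  have halpha : M.mulVec (η μ) ⬝ᵥ A.mulVec (M.mulVec (η ν))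
      = η μ ⬝ᵥ (Mᵀ * A * M).mulVec (η ν) := by
    rw [show (Mᵀ * A * M).mulVec (η ν) = Mᵀ.mulVec (A.mulVec (M.mulVec (η ν))) by
          rw [Matrix.mulVec_mulVec, Matrix.mulVec_mulVec],
        Matrix.dotProduct_mulVec (η μ) Mᵀ (A.mulVec (M.mulVec (η ν))),
        Matrix.vecMul_transpose]
  have hc : η μ ⬝ᵥ (B - Mᵀ * A * M).mulVec (η ν)
      = η μ ⬝ᵥ B.mulVec (η ν) - M.mulVec (η μ) ⬝ᵥ A.mulVec (M.mulVec (η ν)) := by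
    rw [halpha, Matrix.sub_mulVec, dotProduct_sub]
  have hSentry : ((Matrix.of fun μ j => ((η μ j : ℝ) : ℂ)) * (((2⁻¹ : ℝ) : ℂ) • (W.map Complex.ofReal
      + Complex.I • (B - Mᵀ * A * M).map Complex.ofReal)) * (Matrix.of fun μ j => ((η μ j : ℝ) : ℂ))ᴴ) μ ν
      = ((2⁻¹ : ℝ) : ℂ) * (((η μ ⬝ᵥ W.mulVec (η ν) : ℝ) : ℂ)
          + Complex.I * ((η μ ⬝ᵥ (B - Mᵀ * A * M).mulVec (η ν) : ℝ) : ℂ)) := by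
    rw [gram_entry]
    simp only [Matrix.smul_mulVec, Matrix.add_mulVec, dotProduct_smul,
      dotProduct_add, smul_eq_mul, dot_cast]
  have hstar : ∀ z : ℝ, star (Complex.exp (-(1/4 : ℂ) * ((z : ℝ) : ℂ)))
      = Complex.exp (-(1/4 : ℂ) * ((z : ℝ) : ℂ)) := by
    intro z
    have h4 : (-(1/4 : ℂ) * ((z : ℝ) : ℂ)) = ((-(1/4) * z : ℝ) : ℂ) := by push_cast; ring
    rw [h4, ← Complex.ofReal_exp, Complex.star_def, Complex.conj_ofReal]
  simp only [hsub, Matrix.of_apply, hSentry, hstar]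
  rw [mul_assoc, mul_assoc, mul_assoc, ← Complex.exp_add, ← Complex.exp_add, ← Complex.exp_add,
    ← Complex.exp_add]
  congr 1
  rw [hqsplit, hc]
  push_cast
  ring
end

section
/- Let p ≥ 1 be a natural number, M a real number, and f : ℝ^p → ℂ an integrable function satisfying |f(ξ)| ≤ M for all ξ ∈ ℝ^p. Then the limit as L → ∞ (over positive reals L) of (1/L^p) · ∫∫ f(ξ₁ − ξ₂) dξ₁ dξ₂, where both ξ₁ and ξ₂ range over the cube [−L/2, L/2]^p, equals ∫_{ℝ^p} f(ξ) dξ. -/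
open MeasureTheory
open scoped Classical

theorem stmt_11 (p : ℕ) (hp : 1 ≤ p) (M : ℝ) (f : (Fin p → ℝ) → ℂ)
    (hf : Integrable f)
    (hbd : ∀ ξ : Fin p → ℝ, ‖f ξ‖ ≤ M) :
    Filter.Tendsto
      (fun L : ℝ =>
        (1 / (L : ℂ) ^ p) *
          ∫ ξ₁ in Set.Icc (fun _ : Fin p => -(L / 2)) (fun _ : Fin p => L / 2),
            ∫ ξ₂ in Set.Icc (fun _ : Fin p => -(L / 2)) (fun _ : Fin p => L / 2),
              f (ξ₁ - ξ₂))
      Filter.atTop (nhds (∫ ξ, f ξ)) := by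
  have main : ∀ L : ℝ, 0 < L →
      (1 / (L : ℂ) ^ p) *
          ∫ ξ₁ in Set.Icc (fun _ : Fin p => -(L / 2)) (fun _ : Fin p => L / 2),
            ∫ ξ₂ in Set.Icc (fun _ : Fin p => -(L / 2)) (fun _ : Fin p => L / 2),
              f (ξ₁ - ξ₂)
        = ∫ η, ((∏ i, max (1 - |η i| / L) 0 : ℝ)) • f η := by
    intro L hL
    set a : Fin p → ℝ := fun _ => -(L / 2) with ha
    set b : Fin p → ℝ := fun _ => L / 2 with hb
    set c : Set (Fin p → ℝ) := Set.Icc a b with hc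
    have hcm : MeasurableSet c := measurableSet_Icc
    set H : (Fin p → ℝ) → (Fin p → ℝ) → ℂ :=
      fun ξ₁ η => if ξ₁ ∈ c ∧ ξ₁ - η ∈ c then f η else 0 with hH
    -- integrability of uncurried H
    have hT : MeasurableSet {z : (Fin p → ℝ) × (Fin p → ℝ) | z.1 ∈ c ∧ z.1 - z.2 ∈ c} := by
      exact (measurable_fst hcm).inter ((measurable_fst.sub measurable_snd) hcm)
    have hHunc : Function.uncurry H =
        Set.indicator {z : (Fin p → ℝ) × (Fin p → ℝ) | z.1 ∈ c ∧ z.1 - z.2 ∈ c}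
          (fun z => f z.2) := by
      ext z
      by_cases h : z.1 ∈ c ∧ z.1 - z.2 ∈ c <;>
        simp [Function.uncurry, hH, h, Set.indicator_of_mem, Set.indicator_of_notMem]
    have hcvol : volume c < ⊤ := isCompact_Icc.measure_lt_top
    have hbound_int : Integrable (fun z : (Fin p → ℝ) × (Fin p → ℝ) =>
        c.indicator (fun _ => (1:ℝ)) z.1 * ‖f z.2‖) (volume.prod volume) := by
      have h1 : Integrable (c.indicator (fun _ => (1:ℝ))) volume :=
        (integrable_indicator_iff hcm).2 (integrableOn_const hcvol.ne)
      exact h1.mul_prod hf.norm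
    have hHint : Integrable (Function.uncurry H) (volume.prod volume) := by
      refine Integrable.mono' hbound_int ?_ ?_
      · rw [hHunc]
        exact (hf.1.comp_snd).indicator hT
      · refine Filter.Eventually.of_forall (fun z => ?_)
        rw [hHunc]
        by_cases h : z ∈ {z : (Fin p → ℝ) × (Fin p → ℝ) | z.1 ∈ c ∧ z.1 - z.2 ∈ c}
        · rw [Set.indicator_of_mem h]
          have h1 : z.1 ∈ c := h.1
          simp [Set.indicator_of_mem h1]
        · rw [Set.indicator_of_notMem h]
          simp only [norm_zero]
          exact mul_nonneg (Set.indicator_nonneg (fun _ _ => zero_le_one) _) (norm_nonneg _)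
    -- step 1: inner change of variables
    have step1 : ∀ ξ₁, ∫ ξ₂ in c, f (ξ₁ - ξ₂) = ∫ η, (if ξ₁ - η ∈ c then f η else 0) := by
      intro ξ₁
      have h1 : ∫ ξ₂ in c, f (ξ₁ - ξ₂)
          = ∫ ξ₂, c.indicator (fun ξ₂ => f (ξ₁ - ξ₂)) ξ₂ := (integral_indicator hcm).symm
      rw [h1, ← integral_sub_left_eq_self (fun η => if ξ₁ - η ∈ c then f η else 0) volume ξ₁]
      congr 1
      ext ξ₂
      simp [Set.indicator, sub_sub_cancel]
    -- volume of intersection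
    have hvol : ∀ η : Fin p → ℝ,
        (volume (c ∩ {ξ₁ : Fin p → ℝ | ξ₁ - η ∈ c})).toReal = ∏ i, max (L - |η i|) 0 := by
      intro η
      have hset : {ξ₁ : Fin p → ℝ | ξ₁ - η ∈ c} = Set.Icc (a + η) (b + η) := by
        ext x
        simp only [Set.mem_setOf_eq, hc, Set.mem_Icc]
        constructor
        · rintro ⟨h1, h2⟩
          exact ⟨fun i => by have := h1 i; simp at this ⊢; linarith,
                 fun i => by have := h2 i; simp at this ⊢; linarith⟩
        · rintro ⟨h1, h2⟩
          exact ⟨fun i => by have := h1 i; simp at this ⊢; linarith,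
                 fun i => by have := h2 i; simp at this ⊢; linarith⟩
      rw [hset, hc, Set.Icc_inter_Icc, Real.volume_Icc_pi, ENNReal.toReal_prod]
      refine Finset.prod_congr rfl (fun i _ => ?_)
      rw [ENNReal.toReal_ofReal']
      congr 1
      simp only [Pi.inf_apply, Pi.sup_apply, Pi.add_apply, ha, hb]
      rcases le_total 0 (η i) with h | h
      · rw [abs_of_nonneg h, min_eq_left (by linarith), max_eq_right (by linarith)]
        ring
      · rw [abs_of_nonpos h, min_eq_right (by linarith), max_eq_left (by linarith)]
        ring
    -- the double integral
    have double : (∫ ξ₁ in c, ∫ ξ₂ in c, f (ξ₁ - ξ₂))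
        = ∫ η, ((∏ i, max (L - |η i|) 0 : ℝ)) • f η := by
      calc ∫ ξ₁ in c, ∫ ξ₂ in c, f (ξ₁ - ξ₂)
          = ∫ ξ₁ in c, ∫ η, (if ξ₁ - η ∈ c then f η else 0) :=
            integral_congr_ae (Filter.Eventually.of_forall (fun ξ₁ => step1 ξ₁))
        _ = ∫ ξ₁, c.indicator (fun ξ₁ => ∫ η, (if ξ₁ - η ∈ c then f η else 0)) ξ₁ :=
            (integral_indicator hcm).symm
        _ = ∫ ξ₁, ∫ η, H ξ₁ η := by
            congr 1
            ext ξ₁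
            by_cases h : ξ₁ ∈ c
            · simp only [Set.indicator_of_mem h, hH]
              congr 1
              ext η
              simp [h]
            · simp only [Set.indicator_of_notMem h, hH]
              have : ∀ η, (if ξ₁ ∈ c ∧ ξ₁ - η ∈ c then f η else 0) = 0 := by
                intro η; simp [h]
              simp [this]
        _ = ∫ η, ∫ ξ₁, H ξ₁ η := integral_integral_swap hHint
        _ = ∫ η, ((∏ i, max (L - |η i|) 0 : ℝ)) • f η := by
            congr 1
            ext η
            have hform : ∀ ξ₁, H ξ₁ η
                = Set.indicator (c ∩ {ξ₁ : Fin p → ℝ | ξ₁ - η ∈ c}) (fun _ => f η) ξ₁ := by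
              intro ξ₁
              by_cases h : ξ₁ ∈ c ∧ ξ₁ - η ∈ c
              · rw [Set.indicator_of_mem (by exact ⟨h.1, h.2⟩)]
                simp [hH, h]
              · rw [Set.indicator_of_notMem (by simpa using h)]
                simp [hH, h]
            have hmeas : MeasurableSet (c ∩ {ξ₁ : Fin p → ℝ | ξ₁ - η ∈ c}) :=
              hcm.inter ((measurable_id.sub measurable_const) hcm)
            calc ∫ ξ₁, H ξ₁ η
                = ∫ ξ₁, Set.indicator (c ∩ {ξ₁ : Fin p → ℝ | ξ₁ - η ∈ c}) (fun _ => f η) ξ₁ := by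
                  congr 1; ext ξ₁; exact hform ξ₁
              _ = (volume (c ∩ {ξ₁ : Fin p → ℝ | ξ₁ - η ∈ c})).toReal • f η :=
                  integral_indicator_const _ hmeas
              _ = ((∏ i, max (L - |η i|) 0 : ℝ)) • f η := by rw [hvol η]
    rw [double, ← integral_const_mul]
    congr 1
    ext η
    have hr : (∏ i, max (1 - |η i| / L) 0 : ℝ) = (∏ i, max (L - |η i|) 0) / L ^ p := by
      have key : ∀ i : Fin p, max (1 - |η i| / L) 0 = max (L - |η i|) 0 / L := by
        intro i
        rcases le_total (L - |η i|) 0 with h | h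
        · have h' : 1 - |η i| / L ≤ 0 :=
            sub_nonpos.2 ((one_le_div hL).2 (by linarith))
          rw [max_eq_right h', max_eq_right h, zero_div]
        · have h1 : 0 ≤ 1 - |η i| / L := by
            rw [sub_nonneg, div_le_one hL]; linarith
          rw [max_eq_left h1, max_eq_left h, sub_div, div_self hL.ne']
      calc (∏ i, max (1 - |η i| / L) 0 : ℝ)
          = ∏ i, (max (L - |η i|) 0 / L) := Finset.prod_congr rfl (fun i _ => key i)
        _ = (∏ i, max (L - |η i|) 0) / ∏ _i : Fin p, L := Finset.prod_div_distrib _ _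
        _ = (∏ i, max (L - |η i|) 0) / L ^ p := by
            rw [Finset.prod_const, Finset.card_univ, Fintype.card_fin]
    rw [hr, Complex.real_smul, Complex.real_smul]
    have hLne : (L : ℂ) ^ p ≠ 0 := pow_ne_zero _ (by exact_mod_cast hL.ne')
    push_cast
    field_simp
  -- dominated convergence
  have tends : Filter.Tendsto
      (fun L : ℝ => ∫ η, ((∏ i, max (1 - |η i| / L) 0 : ℝ)) • f η)
      Filter.atTop (nhds (∫ ξ, f ξ)) := by
    apply tendsto_integral_filter_of_dominated_convergence (bound := fun η => ‖f η‖)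
    · refine Filter.Eventually.of_forall (fun L => ?_)
      have hcont : Continuous (fun η : Fin p → ℝ => (∏ i, max (1 - |η i| / L) 0 : ℝ)) := by
        apply continuous_finset_prod
        intro i _
        have : Continuous (fun η : Fin p → ℝ => |η i| / L) :=
          by fun_prop
        exact (continuous_const.sub this).max continuous_const
      exact hcont.aestronglyMeasurable.smul hf.1
    · filter_upwards [Filter.eventually_gt_atTop 0] with L hL
      refine Filter.Eventually.of_forall (fun η => ?_)
      rw [norm_smul]
      have h1 : ∀ i : Fin p, (0:ℝ) ≤ max (1 - |η i| / L) 0 := fun i => le_max_right _ _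
      have h2 : ∀ i : Fin p, max (1 - |η i| / L) 0 ≤ 1 := by
        intro i
        apply max_le _ zero_le_one
        have : 0 ≤ |η i| / L := div_nonneg (abs_nonneg _) hL.le
        linarith
      have hprod0 : (0:ℝ) ≤ ∏ i, max (1 - |η i| / L) 0 :=
        Finset.prod_nonneg (fun i _ => h1 i)
      have hprod1 : (∏ i, max (1 - |η i| / L) 0 : ℝ) ≤ 1 :=
        Finset.prod_le_one (fun i _ => h1 i) (fun i _ => h2 i)
      calc ‖(∏ i, max (1 - |η i| / L) 0 : ℝ)‖ * ‖f η‖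
          = (∏ i, max (1 - |η i| / L) 0 : ℝ) * ‖f η‖ := by
            rw [Real.norm_eq_abs, abs_of_nonneg hprod0]
        _ ≤ 1 * ‖f η‖ := mul_le_mul_of_nonneg_right hprod1 (norm_nonneg _)
        _ = ‖f η‖ := one_mul _
    · exact hf.norm
    · refine Filter.Eventually.of_forall (fun η => ?_)
      have hlim : Filter.Tendsto (fun L : ℝ => (∏ i, max (1 - |η i| / L) 0 : ℝ))
          Filter.atTop (nhds 1) := by
        have : Filter.Tendsto (fun L : ℝ => (∏ i, max (1 - |η i| / L) 0 : ℝ))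
            Filter.atTop (nhds (∏ _i : Fin p, (1:ℝ))) := by
          apply tendsto_finset_prod
          intro i _
          have h0 : Filter.Tendsto (fun L : ℝ => |η i| / L) Filter.atTop (nhds 0) :=
            Filter.Tendsto.div_atTop tendsto_const_nhds Filter.tendsto_id
          have h1 : Filter.Tendsto (fun L : ℝ => 1 - |η i| / L) Filter.atTop (nhds 1) := by
            have hc : Filter.Tendsto (fun _ : ℝ => (1:ℝ)) Filter.atTop (nhds 1) :=
              tendsto_const_nhds
            simpa using hc.sub h0
          have hc0 : Filter.Tendsto (fun _ : ℝ => (0:ℝ)) Filter.atTop (nhds 0) :=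
            tendsto_const_nhds
          have := h1.max hc0
          simpa using this
        simpa using this
      have := hlim.smul_const (f η)
      simpa using this
  refine tends.congr' ?_
  filter_upwards [Filter.eventually_gt_atTop 0] with L hL
  exact (main L hL).symm
end
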